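/- arXiv:2412.11968 — 3 statements merged into one kernel-verified Lean document; each statement's English description precedes it below -/
import Mathlib

section
/- Let R be a ring and H ≤ G groups with H of finite index in G. Then for every right R[H]-module M, the induced module M ⊗_{R[H]} R[G] and the coinduced module Hom_{R[H]}(R[G], M) are isomorphic as R[G]-modules. -/
open CategoryTheory

open MulOpposite
open scoped Classical

namespace FrobAux
variable (R : Type) [Ring R] {G : Type} [Group G] (H : Subgroup G)

noncomputable def eps : MonoidAlgebra R G →+ MonoidAlgebra R H where
  toFun v := MonoidAlgebra.ofCoeff (Finsupp.comapDomain Subtype.val v.coeff (Subtype.val_injective.injOn))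
  map_zero' := by ext a; simp
  map_add' v w := by ext a; rfl

lemma eps_apply (v : MonoidAlgebra R G) (a : H) : (eps R H v).coeff a = v.coeff ↑a := rfl

lemma eps_single (g : G) (r : R) :
    eps R H (MonoidAlgebra.single g r)
      = if hg : g ∈ H then MonoidAlgebra.single (⟨g, hg⟩ : H) r else 0 := by
  ext a
  rw [eps_apply]
  by_cases hg : g ∈ H
  · rw [dif_pos hg]
    simp only [MonoidAlgebra.coeff_single, Finsupp.single_apply]
    congr 1
    simp [Subtype.ext_iff]
  · rw [dif_neg hg]
    have : g ≠ ↑a := fun h => hg (h ▸ a.2)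
    simp [MonoidAlgebra.coeff_single, Finsupp.single_apply, this]

noncomputable abbrev ι (w : MonoidAlgebra R H) : MonoidAlgebra R G :=
  MonoidAlgebra.mapDomainRingHom R H.subtype w

lemma ι_single (h : H) (s : R) :
    ι R H (MonoidAlgebra.single h s) = MonoidAlgebra.single (↑h : G) s := by
  simp [ι, MonoidAlgebra.mapDomainRingHom, Finsupp.mapDomain_single]

lemma eps_mul_right (v : MonoidAlgebra R G) (w : MonoidAlgebra R H) :
    eps R H (v * ι R H w) = eps R H v * w := by
  induction v using MonoidAlgebra.induction_linear with
  | zero => simp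
  | add a b ha hb => simp only [map_add, mul_add, add_mul, ha, hb]
  | single g r =>
    induction w using MonoidAlgebra.induction_linear with
    | zero => simp
    | add a b ha hb => simp only [map_add, mul_add, add_mul, ha, hb]
    | single h s =>
      rw [ι_single, MonoidAlgebra.single_mul_single, eps_single, eps_single]
      by_cases hg : g ∈ H
      · rw [dif_pos hg, dif_pos (H.mul_mem hg h.2), MonoidAlgebra.single_mul_single]
        congr 1
      · rw [dif_neg hg, dif_neg (fun hm => hg (by simpa using H.mul_mem hm (H.inv_mem h.2))),
          zero_mul]

lemma eps_mul_left (v : MonoidAlgebra R G) (w : MonoidAlgebra R H) :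
    eps R H (ι R H w * v) = w * eps R H v := by
  induction v using MonoidAlgebra.induction_linear with
  | zero => simp
  | add a b ha hb => simp only [map_add, mul_add, add_mul, ha, hb]
  | single g r =>
    induction w using MonoidAlgebra.induction_linear with
    | zero => simp
    | add a b ha hb => simp only [map_add, mul_add, add_mul, ha, hb]
    | single h s =>
      rw [ι_single, MonoidAlgebra.single_mul_single, eps_single, eps_single]
      by_cases hg : g ∈ H
      · rw [dif_pos hg, dif_pos (H.mul_mem h.2 hg), MonoidAlgebra.single_mul_single]
        congr 1
      · rw [dif_neg hg, dif_neg (fun hm => hg (by simpa using H.mul_mem (H.inv_mem h.2) hm)),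
          mul_zero]

lemma mem_iff_mk_eq (σ : G ⧸ H) (g : G) : σ.out⁻¹ * g ∈ H ↔ QuotientGroup.mk g = σ := by
  rw [← QuotientGroup.eq, QuotientGroup.out_eq']
  exact eq_comm

lemma out_mem_iff (σ : G ⧸ H) : σ.out ∈ H ↔ QuotientGroup.mk (1:G) = σ := by
  rw [← mem_iff_mk_eq H σ 1, mul_one, inv_mem_iff]

lemma smul_out_mem (u : G) (σ : G ⧸ H) : (u • σ).out⁻¹ * (u * σ.out) ∈ H := by
  rw [mem_iff_mk_eq, ← smul_eq_mul, MulAction.Quotient.mk_smul_out]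

section Fin
variable [Fintype (G ⧸ H)]

lemma expansion (v : MonoidAlgebra R G) :
    ∑ σ : G ⧸ H, MonoidAlgebra.single σ.out (1:R)
      * ι R H (eps R H (MonoidAlgebra.single σ.out⁻¹ (1:R) * v)) = v := by
  induction v using MonoidAlgebra.induction_linear with
  | zero => simp
  | add a b ha hb =>
    simp only [mul_add, map_add, Finset.sum_add_distrib] at *
    rw [ha, hb]
  | single g r =>
    rw [Finset.sum_eq_single_of_mem (QuotientGroup.mk g) (Finset.mem_univ _)]
    · rw [MonoidAlgebra.single_mul_single, one_mul, eps_single,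
        dif_pos ((mem_iff_mk_eq H _ g).mpr rfl), ι_single, MonoidAlgebra.single_mul_single,
        mul_inv_cancel_left, one_mul]
    · intro σ _ hσ
      rw [MonoidAlgebra.single_mul_single, one_mul, eps_single,
        dif_neg (fun hm => hσ ((mem_iff_mk_eq H σ g).mp hm).symm)]
      simp

lemma unitSum :
    ∑ σ : G ⧸ H, ι R H (eps R H (MonoidAlgebra.single σ.out (1:R)))
      * MonoidAlgebra.single σ.out⁻¹ (1:R) = 1 := by
  rw [Finset.sum_eq_single_of_mem (QuotientGroup.mk (1:G)) (Finset.mem_univ _)]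
  · rw [eps_single, dif_pos ((out_mem_iff H _).mpr rfl), ι_single,
      MonoidAlgebra.single_mul_single, mul_inv_cancel, one_mul, MonoidAlgebra.one_def]
  · intro σ _ hσ
    rw [eps_single, dif_neg (fun hm => hσ ((out_mem_iff H σ).mp hm).symm)]
    simp
end Fin

/-! ### opposite level -/

noncomputable def fhom : (MonoidAlgebra R ↥H)ᵐᵒᵖ →+* (MonoidAlgebra R G)ᵐᵒᵖ :=
  RingHom.op (MonoidAlgebra.mapDomainRingHom R H.subtype)

lemma fhom_apply (a : (MonoidAlgebra R H)ᵐᵒᵖ) : fhom R H a = op (ι R H (unop a)) := rfl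

/-- the trace `B → A` on the opposite algebras -/
noncomputable def epsB (b : (MonoidAlgebra R G)ᵐᵒᵖ) : (MonoidAlgebra R H)ᵐᵒᵖ := op (eps R H (unop b))

lemma epsB_add (b b' : (MonoidAlgebra R G)ᵐᵒᵖ) : epsB R H (b + b') = epsB R H b + epsB R H b' := by
  simp [epsB]

lemma epsB_f_mul (a : (MonoidAlgebra R H)ᵐᵒᵖ) (b : (MonoidAlgebra R G)ᵐᵒᵖ) : epsB R H (fhom R H a * b) = a * epsB R H b := by
  simp only [epsB, fhom_apply, unop_mul, unop_op]
  rw [eps_mul_right]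
  rfl

lemma epsB_mul_f (a : (MonoidAlgebra R H)ᵐᵒᵖ) (b : (MonoidAlgebra R G)ᵐᵒᵖ) : epsB R H (b * fhom R H a) = epsB R H b * a := by
  simp only [epsB, fhom_apply, unop_mul, unop_op]
  rw [eps_mul_left]
  rfl

noncomputable def xx (σ : G ⧸ H) : (MonoidAlgebra R G)ᵐᵒᵖ := op (MonoidAlgebra.single σ.out (1:R))
noncomputable def yy (σ : G ⧸ H) : (MonoidAlgebra R G)ᵐᵒᵖ := op (MonoidAlgebra.single σ.out⁻¹ (1:R))

section Fin2
variable [Fintype (G ⧸ H)]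

lemma expansionB (b : (MonoidAlgebra R G)ᵐᵒᵖ) :
    ∑ σ : G ⧸ H, fhom R H (epsB R H (b * yy R H σ)) * xx R H σ = b := by
  apply unop_injective
  simpa only [Finset.unop_sum, unop_mul, unop_op, fhom_apply, epsB, xx, yy] using expansion R H (unop b)

lemma unitSumB : ∑ σ : G ⧸ H, yy R H σ * fhom R H (epsB R H (xx R H σ)) = 1 := by
  apply unop_injective
  simpa only [Finset.unop_sum, unop_mul, unop_op, unop_one, fhom_apply, epsB, xx, yy] using unitSum R H
end Fin2

/-- the "matrix coefficient" in `A` -/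
noncomputable def aa (u : G) (r : R) (σ : G ⧸ H) : (MonoidAlgebra R H)ᵐᵒᵖ :=
  op (MonoidAlgebra.single (⟨(u • σ).out⁻¹ * (u * σ.out), smul_out_mem H u σ⟩ : H) r)

lemma shift1 (u : G) (r : R) (σ : G ⧸ H) :
    xx R H σ * op (MonoidAlgebra.single u r) = fhom R H (aa R H u r σ) * xx R H (u • σ) := by
  apply unop_injective
  simp only [unop_mul, unop_op, fhom_apply, aa, xx, ι_single]
  rw [MonoidAlgebra.single_mul_single, MonoidAlgebra.single_mul_single,
    mul_inv_cancel_left, one_mul, mul_one]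

lemma shift2 (u : G) (r : R) (σ : G ⧸ H) :
    yy R H σ * fhom R H (aa R H u r σ) = op (MonoidAlgebra.single ((u • σ).out⁻¹ * u) r) := by
  apply unop_injective
  simp only [unop_mul, unop_op, fhom_apply, aa, yy, ι_single]
  rw [MonoidAlgebra.single_mul_single, mul_one, mul_assoc, mul_inv_cancel_right]

lemma shift3 (u : G) (r : R) (σ : G ⧸ H) :
    op (MonoidAlgebra.single u r) * yy R H σ = op (MonoidAlgebra.single (σ.out⁻¹ * u) r) := by
  apply unop_injective
  simp only [unop_mul, unop_op, yy]
  rw [MonoidAlgebra.single_mul_single, one_mul]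


-- module level
set_option maxHeartbeats 1000000
universe v

variable (M : ModuleCat.{v} (MonoidAlgebra R H)ᵐᵒᵖ) {N : ModuleCat.{v} (MonoidAlgebra R G)ᵐᵒᵖ}

/-- unbundled carrier of the coextended module -/
noncomputable abbrev CoextCarrier : Type v :=
  (ModuleCat.restrictScalars (fhom R H)).obj (ModuleCat.of _ (MonoidAlgebra R G)ᵐᵒᵖ)
    →ₗ[(MonoidAlgebra R H)ᵐᵒᵖ] M

/-- the unit-like map `m ↦ (b ↦ ε(b) • m)` -/
noncomputable def eta (m : M) : CoextCarrier R H M where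
  toFun b := epsB R H b • m
  map_add' b b' := (congrArg (· • m) (epsB_add R H b b')).trans (add_smul _ _ _)
  map_smul' a b := (congrArg (· • m) (epsB_f_mul R H a b)).trans (mul_smul _ _ _)

lemma eta_apply (m : M) (b : (MonoidAlgebra R G)ᵐᵒᵖ) : eta R H M m b = epsB R H b • m := rfl

lemma eta_add (m m' : M) : eta R H M (m + m') = eta R H M m + eta R H M m' := by
  apply LinearMap.ext; intro b
  exact smul_add (epsB R H b) m m'

lemma eta_smul (a : (MonoidAlgebra R H)ᵐᵒᵖ) (m : M) :
    eta R H M (a • m) = (fhom R H a) • eta R H M m := by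
  apply LinearMap.ext; intro b
  exact (mul_smul (epsB R H b) a m).symm.trans (congrArg (· • m) (epsB_mul_f R H a b).symm)

variable {M}

/-- forward map of the hom-equivalence -/
noncomputable def toRes (φ : (ModuleCat.coextendScalars (fhom R H)).obj M ⟶ N) :
    M ⟶ (ModuleCat.restrictScalars (fhom R H)).obj N :=
    ModuleCat.ofHom (X := M) (Y := (ModuleCat.restrictScalars (fhom R H)).obj N) {
  toFun m := φ (eta R H M m)
  map_add' m m' := (congrArg φ.hom (eta_add R H M m m')).trans (map_add φ.hom _ _)
  map_smul' a m := by
    dsimp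
    rw [eta_smul]
    exact φ.hom.map_smul _ _ }

lemma toRes_apply (φ : (ModuleCat.coextendScalars (fhom R H)).obj M ⟶ N) (m : M) :
    toRes R H φ m = φ (eta R H M m) := rfl

section Fin3
variable [Fintype (G ⧸ H)]

/-- the sum map underlying the backward direction -/
noncomputable def sFun (ψ : M ⟶ (ModuleCat.restrictScalars (fhom R H)).obj N)
    (g : CoextCarrier R H M) : N :=
  ∑ σ : G ⧸ H, yy R H σ • ψ (g (xx R H σ))

lemma frobKey (ψ : M ⟶ (ModuleCat.restrictScalars (fhom R H)).obj N)
    (g : CoextCarrier R H M) (b : (MonoidAlgebra R G)ᵐᵒᵖ) :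
    ∑ σ : G ⧸ H, yy R H σ • ψ (g (xx R H σ * b))
      = ∑ σ : G ⧸ H, (b * yy R H σ) • ψ (g (xx R H σ)) := by
  induction b using MulOpposite.rec' with
  | h v =>
    induction v using MonoidAlgebra.induction_linear with
    | zero =>
      simp only [show (op (0 : MonoidAlgebra R G)) = 0 from rfl, mul_zero, zero_mul, map_zero,
        smul_zero, zero_smul]
      exact Finset.sum_congr rfl fun σ _ => (congrArg (yy R H σ • ·)
        ((congrArg ψ.hom g.map_zero).trans (map_zero ψ.hom))).trans (smul_zero _)
    | add p q hp hq =>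
      simp only [show (op (p + q) : (MonoidAlgebra R G)ᵐᵒᵖ) = op p + op q from rfl, mul_add,
        add_mul, map_add, smul_add, add_smul, Finset.sum_add_distrib, hp, hq]
      rw [← hp, ← hq, ← Finset.sum_add_distrib]
      exact Finset.sum_congr rfl fun σ _ => (congrArg (yy R H σ • ·)
        ((congrArg ψ.hom (g.map_add (xx R H σ * op p) (xx R H σ * op q))).trans
          (map_add ψ.hom _ _))).trans (smul_add _ _ _)
    | single u r =>
      have hterm : ∀ σ : G ⧸ H,
          yy R H σ • ψ (g (xx R H σ * op (MonoidAlgebra.single u r)))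
            = op (MonoidAlgebra.single (((u • σ).out)⁻¹ * u) r) • ψ (g (xx R H (u • σ))) := by
        intro σ
        rw [shift1 R H u r σ]
        erw [show g (fhom R H (aa R H u r σ) * xx R H (u • σ))
            = aa R H u r σ • g (xx R H (u • σ)) from g.map_smul _ _]
        erw [ψ.hom.map_smul]
        erw [show (aa R H u r σ • ψ (g (xx R H (u • σ))) : N)
            = fhom R H (aa R H u r σ) • ψ (g (xx R H (u • σ))) from rfl]
        rw [← mul_smul, shift2]
      calc ∑ σ : G ⧸ H, yy R H σ • ψ (g (xx R H σ * op (MonoidAlgebra.single u r)))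
          = ∑ σ : G ⧸ H,
              op (MonoidAlgebra.single (((u • σ).out)⁻¹ * u) r) • ψ (g (xx R H (u • σ))) :=
            Finset.sum_congr rfl fun σ _ => hterm σ
        _ = ∑ τ : G ⧸ H, op (MonoidAlgebra.single ((τ.out)⁻¹ * u) r) • ψ (g (xx R H τ)) :=
            Fintype.sum_bijective (fun σ => u • σ) (MulAction.bijective u) _ _ (fun σ => rfl)
        _ = ∑ σ : G ⧸ H, (op (MonoidAlgebra.single u r) * yy R H σ) • ψ (g (xx R H σ)) :=
            Finset.sum_congr rfl fun σ _ => by rw [shift3]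

lemma sFun_add (ψ : M ⟶ (ModuleCat.restrictScalars (fhom R H)).obj N)
    (g g' : CoextCarrier R H M) :
    sFun R H ψ (g + g') = sFun R H ψ g + sFun R H ψ g' := by
  simp only [sFun, LinearMap.add_apply, map_add, smul_add, Finset.sum_add_distrib]
  exact (Finset.sum_congr rfl fun σ _ => (congrArg (yy R H σ • ·)
    (map_add ψ.hom (g (xx R H σ)) (g' (xx R H σ)))).trans (smul_add _ _ _)).trans
    Finset.sum_add_distrib

lemma sFun_smul (ψ : M ⟶ (ModuleCat.restrictScalars (fhom R H)).obj N)
    (b : (MonoidAlgebra R G)ᵐᵒᵖ) (g : CoextCarrier R H M) :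
    sFun R H ψ (b • g) = b • sFun R H ψ g := by
  rw [show sFun R H ψ (b • g) = ∑ σ : G ⧸ H, yy R H σ • ψ (g (xx R H σ * b)) from
    Finset.sum_congr rfl fun σ _ => by rw [ModuleCat.CoextendScalars.smul_apply']]
  rw [frobKey, sFun]
  exact (Finset.sum_congr rfl fun σ _ => mul_smul b (yy R H σ) _).trans Finset.smul_sum.symm

/-- backward map of the hom-equivalence -/
noncomputable def fromRes (ψ : M ⟶ (ModuleCat.restrictScalars (fhom R H)).obj N) :
    (ModuleCat.coextendScalars (fhom R H)).obj M ⟶ N := ModuleCat.ofHom {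
  toFun g := sFun R H ψ g
  map_add' g g' := sFun_add R H ψ g g'
  map_smul' b g := sFun_smul R H ψ b g }

lemma fromRes_apply (ψ : M ⟶ (ModuleCat.restrictScalars (fhom R H)).obj N)
    (g : CoextCarrier R H M) :
    fromRes R H ψ g = ∑ σ : G ⧸ H, yy R H σ • ψ (g (xx R H σ)) := rfl

lemma key_expansion_pt (g : CoextCarrier R H M) (b : (MonoidAlgebra R G)ᵐᵒᵖ) :
    ∑ σ : G ⧸ H, (yy R H σ • eta R H M (g (xx R H σ))) b = g b := by
  calc ∑ σ : G ⧸ H, (yy R H σ • eta R H M (g (xx R H σ))) b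
      = ∑ σ : G ⧸ H, epsB R H (b * yy R H σ) • g (xx R H σ) := by
        refine Finset.sum_congr rfl fun σ _ => ?_
        rw [ModuleCat.CoextendScalars.smul_apply', eta_apply]
    _ = ∑ σ : G ⧸ H, g (fhom R H (epsB R H (b * yy R H σ)) * xx R H σ) :=
        Finset.sum_congr rfl fun σ _ => (g.map_smul (epsB R H (b * yy R H σ)) (xx R H σ)).symm
    _ = g (∑ σ : G ⧸ H, fhom R H (epsB R H (b * yy R H σ)) * xx R H σ) := (map_sum g _ _).symm
    _ = g b := congrArg (fun z => g z) (expansionB R H b)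

lemma key_expansion (g : CoextCarrier R H M) :
    ∑ σ : G ⧸ H, yy R H σ • eta R H M (g (xx R H σ)) = g := by
  apply LinearMap.ext; intro b
  rw [LinearMap.sum_apply]
  exact key_expansion_pt R H g b

lemma left_inv_aux (φ : (ModuleCat.coextendScalars (fhom R H)).obj M ⟶ N) :
    fromRes R H (toRes R H φ) = φ := by
  apply ModuleCat.hom_ext; apply LinearMap.ext; intro g
  calc fromRes R H (toRes R H φ) g
      = ∑ σ : G ⧸ H, yy R H σ • φ (eta R H M (g (xx R H σ))) := rfl
    _ = ∑ σ : G ⧸ H, φ (yy R H σ • eta R H M (g (xx R H σ))) :=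
        Finset.sum_congr rfl fun σ _ => (φ.hom.map_smul _ _).symm
    _ = φ (∑ σ : G ⧸ H, yy R H σ • eta R H M (g (xx R H σ))) := (map_sum φ.hom _ _).symm
    _ = φ g := congrArg (fun z => φ z) (key_expansion R H g)

lemma right_inv_aux (ψ : M ⟶ (ModuleCat.restrictScalars (fhom R H)).obj N) :
    toRes R H (fromRes R H ψ) = ψ := by
  apply ModuleCat.hom_ext; apply LinearMap.ext; intro m
  calc toRes R H (fromRes R H ψ) m
      = ∑ σ : G ⧸ H, yy R H σ • ψ (eta R H M m (xx R H σ)) := rfl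
    _ = ∑ σ : G ⧸ H, (yy R H σ * fhom R H (epsB R H (xx R H σ))) • ψ m := by
        refine Finset.sum_congr rfl fun σ _ => ?_
        rw [eta_apply, ψ.hom.map_smul, mul_smul]
        rfl
    _ = (∑ σ : G ⧸ H, yy R H σ * fhom R H (epsB R H (xx R H σ))) • ψ m :=
        (Finset.sum_smul).symm
    _ = ψ m := by rw [unitSumB, one_smul]

end Fin3

/-- With finitely many cosets, coextension of scalars is a LEFT adjoint of restriction. -/
noncomputable def frobAdj [Fintype (G ⧸ H)] :
    @CategoryTheory.Adjunction (ModuleCat.{v} (MonoidAlgebra R H)ᵐᵒᵖ) _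
      (ModuleCat.{v} (MonoidAlgebra R G)ᵐᵒᵖ) _
      (ModuleCat.coextendScalars (fhom R H)) (ModuleCat.restrictScalars (fhom R H)) :=
  CategoryTheory.Adjunction.mkOfHomEquiv
    { homEquiv := fun M N =>
        { toFun := toRes R H
          invFun := fromRes R H
          left_inv := fun φ => left_inv_aux R H φ
          right_inv := fun ψ => right_inv_aux R H ψ }
      homEquiv_naturality_left_symm := fun f' ψ => ModuleCat.hom_ext (LinearMap.ext fun g => rfl)
      homEquiv_naturality_right := fun φ h => ModuleCat.hom_ext (LinearMap.ext fun m => rfl) }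

end FrobAux

/-- Let `R` be a ring and `H ≤ G` groups with `H` of finite index in `G`. Then for every right
`R[H]`-module `M`, the induced module `M ⊗_{R[H]} R[G]` and the coinduced module
`Hom_{R[H]}(R[G], M)` are isomorphic as `R[G]`-modules. (Right modules are encoded as left
modules over the opposite group rings; induction is any left adjoint of the restriction functor,
and coinduction is `ModuleCat.coextendScalars`.) -/
theorem induction_iso_coinduction_of_finite_index
    (G : Type) [Group G] (H : Subgroup G) (hfin : H.index ≠ 0) (R : Type) [Ring R] :
    ∀ Ind : ModuleCat (MonoidAlgebra R H)ᵐᵒᵖ ⥤ ModuleCat (MonoidAlgebra R G)ᵐᵒᵖ,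
      (Ind ⊣ ModuleCat.restrictScalars
        (RingHom.op (MonoidAlgebra.mapDomainRingHom R H.subtype))) →
      ∀ M : ModuleCat (MonoidAlgebra R H)ᵐᵒᵖ,
        Nonempty (Ind.obj M ≅ (ModuleCat.coextendScalars
          (RingHom.op (MonoidAlgebra.mapDomainRingHom R H.subtype))).obj M) := by
  intro Ind adj M
  have hf : Finite (G ⧸ H) := Nat.finite_of_card_ne_zero hfin
  letI : Fintype (G ⧸ H) := Fintype.ofFinite _
  exact ⟨(adj.leftAdjointUniq (FrobAux.frobAdj R H)).app M⟩
end

section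
/- Mackey's formula: Let R be a ring, H, K ≤ G groups, and M a right R[H]-module. Then there is an R[K]-module isomorphism Res^G_K Ind^G_H M ≅ ⊕_{g ∈ H\G/K} Ind^K_{K ∩ g⁻¹Hg} Res^{g⁻¹Hg}_{K ∩ g⁻¹Hg} (gM), where gM denotes M ⊗_{R[H]} R[Hg] with its right (g⁻¹Hg)-module structure, the sum running over a set of (H,K)-double coset representatives g. -/
open CategoryTheory

variable {G : Type} [Group G]

/-- The subgroup `K ∩ g⁻¹Hg` of `G`. -/
def mackeyInter (H K : Subgroup G) (g : G) : Subgroup G :=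
  K ⊓ Subgroup.map (MulAut.conj g⁻¹).toMonoidHom H

/-- Conjugation `x ↦ g x g⁻¹` as a group homomorphism `K ∩ g⁻¹Hg →* H`. -/
def mackeyConj (H K : Subgroup G) (g : G) : ↥(mackeyInter H K g) →* ↥H :=
  MonoidHom.codRestrict ((MulAut.conj g).toMonoidHom.comp (mackeyInter H K g).subtype) H
    (by
      rintro ⟨x, hx⟩
      obtain ⟨y, hy, rfl⟩ := (Subgroup.mem_inf.mp hx).2
      simpa [MulAut.conj_apply, mul_assoc] using hy)

namespace MackeyProof

open MulOpposite CategoryTheory.Limits MonoidAlgebra ModuleCat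

/-- `op (single s r)` : the basic elements of the opposite monoid algebra. -/
noncomputable abbrev gs (R : Type) [Ring R] {S : Type} [Monoid S] (s : S) (r : R) :
    (MonoidAlgebra R S)ᵐᵒᵖ := op (single s r)

variable {R : Type} [Ring R]

lemma gs_mul {S : Type} [Monoid S] (s t : S) (r r' : R) :
    gs R s r * gs R t r' = gs R (t * s) (r' * r) := by
  rw [gs, gs, ← op_mul, single_mul_single]

lemma gs_one {S : Type} [Monoid S] : gs R (1 : S) (1 : R) = 1 := by
  rw [gs, ← one_def, op_one]

lemma gs_gs_smul {S V : Type} [Monoid S] [AddCommMonoid V] [Module (MonoidAlgebra R S)ᵐᵒᵖ V]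
    (s t : S) (r r' : R) (v : V) :
    gs R s r • gs R t r' • v = gs R (t * s) (r' * r) • v := by
  rw [smul_smul, gs_mul]

lemma map_gs {S T : Type} [Monoid S] [Monoid T] (f : S →* T) (s : S) (r : R) :
    (RingHom.op (mapDomainRingHom R f)) (gs R s r) = gs R (f s) r := by
  simp [gs, RingHom.op, Finsupp.mapDomain_single]

/-- Build a linear map over an opposite monoid algebra from an additive map commuting with
the `op single` elements. -/
def mkLinear {S V W : Type} [Monoid S] [AddCommMonoid V] [AddCommMonoid W]
    [Module (MonoidAlgebra R S)ᵐᵒᵖ V] [Module (MonoidAlgebra R S)ᵐᵒᵖ W] (f : V →+ W)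
    (hf : ∀ (s : S) (r : R) (v : V), f (gs R s r • v) = gs R s r • f v) :
    V →ₗ[(MonoidAlgebra R S)ᵐᵒᵖ] W where
  toFun := f
  map_add' := f.map_add
  map_smul' a v := by
    let o : MonoidAlgebra R S → (MonoidAlgebra R S)ᵐᵒᵖ := fun x => op x
    obtain ⟨x, rfl⟩ : ∃ x : MonoidAlgebra R S, o x = a := ⟨unop a, rfl⟩
    dsimp only [RingHom.id_apply]
    induction x using MonoidAlgebra.induction with
    | zero => rw [show o 0 = 0 from rfl, zero_smul, zero_smul, map_zero]
    | single_add g r y _ _ ih =>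
      rw [show o (single g r + y) = gs R g r + o y from rfl,
        add_smul, add_smul, f.map_add, hf, ih]


section Main

variable {G : Type} [Group G] (H K : Subgroup G) (R : Type) [Ring R]

lemma mackeyConj_coe (gq : G) (x : ↥(mackeyInter H K gq)) :
    ((mackeyConj H K gq x : ↥H) : G) = gq * (x : G) * gq⁻¹ := rfl

lemma exists_dec (g : G) :
    ∃ hk : ↥H × ↥K, g = (hk.1 : G) * (DoubleCoset.mk H K g).out * (hk.2 : G) := by
  obtain ⟨h, k, hh, hk, he⟩ := DoubleCoset.mk_out_eq_mul H K g
  refine ⟨(⟨h⁻¹, H.inv_mem hh⟩, ⟨k⁻¹, K.inv_mem hk⟩), ?_⟩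
  show g = h⁻¹ * (DoubleCoset.mk H K g).out * k⁻¹
  rw [he]; group

noncomputable def hsel (g : G) : ↥H := (exists_dec H K g).choose.1

noncomputable def ksel (g : G) : ↥K := (exists_dec H K g).choose.2

lemma dec_spec (g : G) :
    g = (hsel H K g : G) * (DoubleCoset.mk H K g).out * (ksel H K g : G) :=
  (exists_dec H K g).choose_spec

lemma mk_mul_left {h : G} (hh : h ∈ H) (g : G) : DoubleCoset.mk H K (h * g) = DoubleCoset.mk H K g :=
  ((DoubleCoset.eq H K _ _).mpr ⟨h⁻¹, H.inv_mem hh, 1, K.one_mem, by group⟩)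

lemma mk_mul_right {k : G} (hk : k ∈ K) (g : G) : DoubleCoset.mk H K (g * k) = DoubleCoset.mk H K g :=
  ((DoubleCoset.eq H K _ _).mpr ⟨1, H.one_mem, k⁻¹, K.inv_mem hk, by group⟩)

lemma mem_inter_of_dec {gq : G} (h h' : ↥H) (k k' : ↥K)
    (e : (h : G) * gq * k = (h' : G) * gq * k') :
    (k' : G) * (k : G)⁻¹ ∈ mackeyInter H K gq := by
  refine Subgroup.mem_inf.mpr ⟨K.mul_mem k'.2 (K.inv_mem k.2), ?_⟩
  refine ⟨(h' : G)⁻¹ * h, H.mul_mem (H.inv_mem h'.2) h.2, ?_⟩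
  show gq⁻¹ * ((h' : G)⁻¹ * h) * gq⁻¹⁻¹ = (k' : G) * (k : G)⁻¹
  have h1 : ((h' : G) * gq)⁻¹ * ((h : G) * gq * (k : G)) * (k : G)⁻¹ =
      gq⁻¹ * ((h' : G)⁻¹ * h) * gq⁻¹⁻¹ := by group
  rw [← h1, e]; group


variable (M : ModuleCat (MonoidAlgebra R ↥H)ᵐᵒᵖ) (X : ModuleCat (MonoidAlgebra R ↥K)ᵐᵒᵖ)

noncomputable abbrev fH : (MonoidAlgebra R ↥H)ᵐᵒᵖ →+* (MonoidAlgebra R G)ᵐᵒᵖ :=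
  RingHom.op (MonoidAlgebra.mapDomainRingHom R H.subtype)

noncomputable abbrev fK : (MonoidAlgebra R ↥K)ᵐᵒᵖ →+* (MonoidAlgebra R G)ᵐᵒᵖ :=
  RingHom.op (MonoidAlgebra.mapDomainRingHom R K.subtype)

noncomputable abbrev cq (q : DoubleCoset.Quotient (H : Set G) (K : Set G)) :
    (MonoidAlgebra R ↥(mackeyInter H K (Quotient.out q)))ᵐᵒᵖ →+* (MonoidAlgebra R ↥H)ᵐᵒᵖ :=
  RingHom.op (MonoidAlgebra.mapDomainRingHom R (mackeyConj H K (Quotient.out q)))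

noncomputable abbrev iq (q : DoubleCoset.Quotient (H : Set G) (K : Set G)) :
    (MonoidAlgebra R ↥(mackeyInter H K (Quotient.out q)))ᵐᵒᵖ →+* (MonoidAlgebra R ↥K)ᵐᵒᵖ :=
  RingHom.op (MonoidAlgebra.mapDomainRingHom R
    (Subgroup.inclusion (inf_le_left : mackeyInter H K (Quotient.out q) ≤ K)))



def toRes (q : DoubleCoset.Quotient (H : Set G) (K : Set G)) (m : M) :
    ((restrictScalars (cq H K R q)).obj M) := m

def fromRes (q : DoubleCoset.Quotient (H : Set G) (K : Set G))
    (x' : ((restrictScalars (iq H K R q)).obj X)) : X := x'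

lemma toRes_smul (q : DoubleCoset.Quotient (H : Set G) (K : Set G))
    (x : ↥(mackeyInter H K (Quotient.out q))) (r : R) (m : M) :
    gs R x r • toRes H K R M q m = toRes H K R M q (gs R (mackeyConj H K (Quotient.out q) x) r • m) := by
  rw [restrictScalars.smul_def, map_gs]; rfl

lemma fromRes_smul (q : DoubleCoset.Quotient (H : Set G) (K : Set G))
    (x : ↥(mackeyInter H K (Quotient.out q))) (r : R)
    (v : ((restrictScalars (iq H K R q)).obj X)) :
    fromRes H K R X q (gs R x r • v)
      = gs R (Subgroup.inclusion (inf_le_left : mackeyInter H K (Quotient.out q) ≤ K) x) r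
          • fromRes H K R X q v := by
  show (gs R x r • v : ((restrictScalars (iq H K R q)).obj X)) = _
  rw [restrictScalars.smul_def, map_gs]; rfl

variable {H K R M X}

lemma res_step (ψ : ∀ q : DoubleCoset.Quotient (H : Set G) (K : Set G),
      (restrictScalars (cq H K R q)).obj M ⟶ (restrictScalars (iq H K R q)).obj X)
    (q : DoubleCoset.Quotient (H : Set G) (K : Set G))
    (x : ↥(mackeyInter H K (Quotient.out q))) (r : R) (m : M) :
    fromRes H K R X q (ψ q (toRes H K R M q (gs R (mackeyConj H K (Quotient.out q) x) r • m)))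
      = gs R (Subgroup.inclusion (inf_le_left : mackeyInter H K (Quotient.out q) ≤ K) x) r
          • fromRes H K R X q (ψ q (toRes H K R M q m)) := by
  rw [← toRes_smul, (ψ q).hom.map_smul (gs R x r) (toRes H K R M q m), fromRes_smul]

lemma wd (ψ : ∀ q : DoubleCoset.Quotient (H : Set G) (K : Set G),
      (restrictScalars (cq H K R q)).obj M ⟶ (restrictScalars (iq H K R q)).obj X)
    (q : DoubleCoset.Quotient (H : Set G) (K : Set G)) (h h' : ↥H) (k k' : ↥K)
    (e : (h : G) * Quotient.out q * k = (h' : G) * Quotient.out q * k') (r s : R) (m : M) :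
    gs R k s • fromRes H K R X q (ψ q (toRes H K R M q (gs R h r • m)))
      = gs R k' s • fromRes H K R X q (ψ q (toRes H K R M q (gs R h' r • m))) := by
  set x : ↥(mackeyInter H K (Quotient.out q)) :=
    ⟨(k' : G) * (k : G)⁻¹, mem_inter_of_dec H K h h' k k' e⟩ with hx
  have hH : h = h' * mackeyConj H K (Quotient.out q) x := by
    apply Subtype.ext
    rw [Subgroup.coe_mul, mackeyConj_coe]
    show (h : G) = (h' : G) * (Quotient.out q * ((k' : G) * (k : G)⁻¹) * (Quotient.out q)⁻¹)
    have h1 : ((h : G) * Quotient.out q * k) * (k : G)⁻¹ * (Quotient.out q)⁻¹ = (h : G) := by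
      group
    rw [← h1, e]; group
  have hgs : gs R h r = gs R (mackeyConj H K (Quotient.out q) x) 1 * gs R h' r := by
    rw [gs_mul, mul_one, ← hH]
  rw [hgs, mul_smul, res_step, smul_smul, gs_mul]
  have hk2 : Subgroup.inclusion (inf_le_left : mackeyInter H K (Quotient.out q) ≤ K) x * k
      = k' := by
    apply Subtype.ext
    rw [Subgroup.coe_mul]
    show (k' : G) * (k : G)⁻¹ * k = k'
    group
  rw [hk2, one_mul]

lemma st (ψ : ∀ q : DoubleCoset.Quotient (H : Set G) (K : Set G),
      (restrictScalars (cq H K R q)).obj M ⟶ (restrictScalars (iq H K R q)).obj X)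
    (q : DoubleCoset.Quotient (H : Set G) (K : Set G)) (h : ↥H) (k : ↥K) (r s : R) (m : M) :
    gs R k s • fromRes H K R X q (ψ q (toRes H K R M q (gs R h r • m)))
      = gs R k (r * s) • fromRes H K R X q (ψ q (toRes H K R M q (gs R h 1 • m))) := by
  have hgs : gs R h r = gs R (mackeyConj H K (Quotient.out q) 1) r * gs R h 1 := by
    rw [gs_mul, map_one, mul_one, one_mul]
  have hk1 : Subgroup.inclusion (inf_le_left : mackeyInter H K (Quotient.out q) ≤ K) 1 * k = k := by
    rw [map_one, one_mul]
  rw [hgs, mul_smul, res_step, smul_smul, gs_mul]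
  exact congrArg (fun y => gs R y (r * s) • fromRes H K R X q (ψ q (toRes H K R M q (gs R h 1 • m)))) hk1


variable (H K R M X)

def xToRes (q : DoubleCoset.Quotient (H : Set G) (K : Set G)) (v : X) :
    ((restrictScalars (iq H K R q)).obj X) := v

def resToM (q : DoubleCoset.Quotient (H : Set G) (K : Set G))
    (m' : ((restrictScalars (cq H K R q)).obj M)) : M := m'

/-- Evaluation of an element of the coextended module at an element of `R[G]ᵒᵖ`. -/
noncomputable def evalB (w : ((coextendScalars (fK K R)).obj X))
    (b : (MonoidAlgebra R G)ᵐᵒᵖ) : X :=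
  w b

lemma evalB_zero (w : ((coextendScalars (fK K R)).obj X)) : evalB K R X w 0 = 0 :=
  w.map_zero

lemma evalB_add (w : ((coextendScalars (fK K R)).obj X)) (b b' : (MonoidAlgebra R G)ᵐᵒᵖ) :
    evalB K R X w (b + b') = evalB K R X w b + evalB K R X w b' :=
  w.map_add b b' 

variable {H K R M X}

lemma resToM_smul (q : DoubleCoset.Quotient (H : Set G) (K : Set G))
    (x : ↥(mackeyInter H K (Quotient.out q))) (r : R)
    (m' : ((restrictScalars (cq H K R q)).obj M)) :
    resToM H K R M q (gs R x r • m')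
      = gs R (mackeyConj H K (Quotient.out q) x) r • resToM H K R M q m' := by
  show (gs R x r • m' : ((restrictScalars (cq H K R q)).obj M)) = _
  rw [restrictScalars.smul_def, map_gs]; rfl

lemma xToRes_smul (q : DoubleCoset.Quotient (H : Set G) (K : Set G))
    (x : ↥(mackeyInter H K (Quotient.out q))) (r : R) (v : X) :
    gs R x r • xToRes H K R X q v
      = xToRes H K R X q
          (gs R (Subgroup.inclusion (inf_le_left : mackeyInter H K (Quotient.out q) ≤ K) x) r
            • v) := by
  show (gs R x r • xToRes H K R X q v : ((restrictScalars (iq H K R q)).obj X)) = _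
  rw [restrictScalars.smul_def, map_gs]; rfl

lemma evalB_smulK (w : ((coextendScalars (fK K R)).obj X))
    (kk : ↥K) (r : R) (z : (MonoidAlgebra R G)ᵐᵒᵖ) :
    evalB K R X w ((fK K R) (gs R kk r) * z) = gs R kk r • evalB K R X w z :=
  w.map_smul (gs R kk r) z

lemma evalB_smulH (φ : M ⟶ (restrictScalars (fH H R)).obj ((coextendScalars (fK K R)).obj X))
    (m : M) (hh : ↥H) (r : R) (z : (MonoidAlgebra R G)ᵐᵒᵖ) :
    evalB K R X (φ m) (z * (fH H R) (gs R hh r)) = evalB K R X (φ (gs R hh r • m)) z := by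
  rw [φ.hom.map_smul]; rfl

/-- The `θ` function: value of the inverse map on a group element. -/
noncomputable def theta (ψ : ∀ q : DoubleCoset.Quotient (H : Set G) (K : Set G),
      (restrictScalars (cq H K R q)).obj M ⟶ (restrictScalars (iq H K R q)).obj X)
    (m : M) (g : G) : X :=
  gs R (ksel H K g) 1 • fromRes H K R X (DoubleCoset.mk H K g)
    (ψ (DoubleCoset.mk H K g) (toRes H K R M (DoubleCoset.mk H K g) (gs R (hsel H K g) 1 • m)))

noncomputable def T0 (ψ : ∀ q : DoubleCoset.Quotient (H : Set G) (K : Set G),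
      (restrictScalars (cq H K R q)).obj M ⟶ (restrictScalars (iq H K R q)).obj X)
    (m : M) : MonoidAlgebra R G →+ X :=
  AddMonoidHom.comp (Finsupp.liftAddHom fun g =>
    { toFun := fun r => gs R (1 : ↥K) r • theta ψ m g
      map_zero' := by
        show gs R (1 : ↥K) (0 : R) • theta ψ m g = 0
        rw [show gs R (1 : ↥K) (0 : R) = 0 from by simp [gs], zero_smul]
      map_add' := fun r r' => by
        show gs R (1 : ↥K) (r + r') • theta ψ m g
          = gs R (1 : ↥K) r • theta ψ m g + gs R (1 : ↥K) r' • theta ψ m g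
        rw [show gs R (1 : ↥K) (r + r') = gs R (1 : ↥K) r + gs R (1 : ↥K) r' from by
          simp [gs, MonoidAlgebra.single_add], add_smul] })
      MonoidAlgebra.coeffAddEquiv.toAddMonoidHom

lemma T0_single (ψ : ∀ q : DoubleCoset.Quotient (H : Set G) (K : Set G),
      (restrictScalars (cq H K R q)).obj M ⟶ (restrictScalars (iq H K R q)).obj X)
    (m : M) (g : G) (r : R) :
    T0 ψ m (single g r) = gs R (1 : ↥K) r • theta ψ m g :=
  Finsupp.liftAddHom_apply_single _ _ _

lemma T0_mul_right (ψ : ∀ q : DoubleCoset.Quotient (H : Set G) (K : Set G),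
      (restrictScalars (cq H K R q)).obj M ⟶ (restrictScalars (iq H K R q)).obj X)
    (m : M) (k : ↥K) (r : R) (z : MonoidAlgebra R G) :
    T0 ψ m (z * single (k : G) r) = gs R k r • T0 ψ m z := by
  induction z using MonoidAlgebra.induction_linear with
  | zero => rw [zero_mul, map_zero, smul_zero]
  | add f g hf hg => rw [add_mul, map_add, map_add, hf, hg, smul_add]
  | single g r' =>
    rw [single_mul_single, T0_single, T0_single]
    simp only [theta]
    have e1 : DoubleCoset.mk H K (g * (k : G)) = DoubleCoset.mk H K g := mk_mul_right H K k.2 g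
    rw [e1]
    simp only [smul_smul, gs_mul, mul_one, one_mul]
    have d1 := dec_spec H K (g * (k : G))
    rw [e1] at d1
    have d2 := dec_spec H K g
    have l1 : (↑(hsel H K (g * (k : G))) : G) * Quotient.out (DoubleCoset.mk H K g)
        * ↑(ksel H K (g * (k : G))) = g * (k : G) := d1.symm
    have l2 : (↑(hsel H K g) : G) * Quotient.out (DoubleCoset.mk H K g) * ↑(ksel H K g * k)
        = g * (k : G) := by
      rw [Subgroup.coe_mul]
      conv_rhs => rw [d2]
      group
    exact wd ψ (DoubleCoset.mk H K g) (hsel H K (g * (k : G))) (hsel H K g)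
      (ksel H K (g * (k : G))) (ksel H K g * k) (l1.trans l2.symm) 1 (r' * r) m

lemma T0_smul_left (ψ : ∀ q : DoubleCoset.Quotient (H : Set G) (K : Set G),
      (restrictScalars (cq H K R q)).obj M ⟶ (restrictScalars (iq H K R q)).obj X)
    (m : M) (h : ↥H) (r : R) (z : MonoidAlgebra R G) :
    T0 ψ (gs R h r • m) z = T0 ψ m (single (h : G) r * z) := by
  induction z using MonoidAlgebra.induction_linear with
  | zero => rw [map_zero, mul_zero, map_zero]
  | add f g hf hg => rw [map_add, mul_add, map_add, hf, hg]
  | single g r' =>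
    rw [single_mul_single, T0_single, T0_single]
    simp only [theta]
    have e1 : DoubleCoset.mk H K ((h : G) * g) = DoubleCoset.mk H K g := mk_mul_left H K h.2 g
    rw [e1]
    simp only [smul_smul, gs_mul, mul_one, one_mul]
    rw [show gs R (ksel H K g) r' • fromRes H K R X (DoubleCoset.mk H K g)
          ((ψ (DoubleCoset.mk H K g)) (toRes H K R M (DoubleCoset.mk H K g) (gs R (h * hsel H K g) r • m)))
        = gs R (ksel H K g) (r * r') • fromRes H K R X (DoubleCoset.mk H K g)
          ((ψ (DoubleCoset.mk H K g)) (toRes H K R M (DoubleCoset.mk H K g) (gs R (h * hsel H K g) 1 • m)))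
      from st ψ (DoubleCoset.mk H K g) (h * hsel H K g) (ksel H K g) r r' m]
    have d1 := dec_spec H K ((h : G) * g)
    rw [e1] at d1
    have d2 := dec_spec H K g
    have l1 : (↑(h * hsel H K g) : G) * Quotient.out (DoubleCoset.mk H K g) * ↑(ksel H K g)
        = (h : G) * g := by
      rw [Subgroup.coe_mul]
      conv_rhs => rw [d2]
      group
    exact wd ψ (DoubleCoset.mk H K g) (h * hsel H K g) (hsel H K ((h : G) * g)) (ksel H K g)
      (ksel H K ((h : G) * g)) (l1.trans d1) 1 (r * r') m

lemma theta_add (ψ : ∀ q : DoubleCoset.Quotient (H : Set G) (K : Set G),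
      (restrictScalars (cq H K R q)).obj M ⟶ (restrictScalars (iq H K R q)).obj X)
    (m m' : M) (g : G) : theta ψ (m + m') g = theta ψ m g + theta ψ m' g := by
  simp only [theta]
  rw [smul_add,
    show toRes H K R M (DoubleCoset.mk H K g) (gs R (hsel H K g) 1 • m + gs R (hsel H K g) 1 • m')
      = toRes H K R M (DoubleCoset.mk H K g) (gs R (hsel H K g) 1 • m)
        + toRes H K R M (DoubleCoset.mk H K g) (gs R (hsel H K g) 1 • m') from rfl,
    map_add,
    show ∀ a b, fromRes H K R X (DoubleCoset.mk H K g) (a + b)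
      = fromRes H K R X (DoubleCoset.mk H K g) a + fromRes H K R X (DoubleCoset.mk H K g) b
      from fun _ _ => rfl,
    smul_add]

lemma T0_add (ψ : ∀ q : DoubleCoset.Quotient (H : Set G) (K : Set G),
      (restrictScalars (cq H K R q)).obj M ⟶ (restrictScalars (iq H K R q)).obj X)
    (m m' : M) (z : MonoidAlgebra R G) :
    T0 ψ (m + m') z = T0 ψ m z + T0 ψ m' z := by
  induction z using MonoidAlgebra.induction_linear with
  | zero => rw [map_zero, map_zero, map_zero, add_zero]
  | add f g hf hg =>
    rw [map_add, map_add, map_add, hf, hg]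
    abel
  | single g r =>
    rw [T0_single, T0_single, T0_single, theta_add, smul_add]

variable (H K R M X)

/-- The inverse of the heart equivalence, as `R[G]ᵒᵖ`-valued maps. -/
noncomputable def Tlin (ψ : ∀ q : DoubleCoset.Quotient (H : Set G) (K : Set G),
      (restrictScalars (cq H K R q)).obj M ⟶ (restrictScalars (iq H K R q)).obj X)
    (m : M) : ((coextendScalars (fK K R)).obj X) :=
  mkLinear
    (AddMonoidHom.mk' (fun b => T0 ψ m (unop (b : (MonoidAlgebra R G)ᵐᵒᵖ)))
      (fun a b => by
        show T0 ψ m (unop ((a : (MonoidAlgebra R G)ᵐᵒᵖ) + (b : (MonoidAlgebra R G)ᵐᵒᵖ)))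
          = T0 ψ m (unop (a : (MonoidAlgebra R G)ᵐᵒᵖ))
            + T0 ψ m (unop (b : (MonoidAlgebra R G)ᵐᵒᵖ))
        exact map_add (T0 ψ m) (unop a) (unop b)))
    (by
      intro s r v
      show T0 ψ m (unop ((gs R s r • v : ((restrictScalars (fK K R)).obj _)) :
        (MonoidAlgebra R G)ᵐᵒᵖ)) = gs R s r • T0 ψ m (unop (v : (MonoidAlgebra R G)ᵐᵒᵖ))
      rw [restrictScalars.smul_def, map_gs, smul_eq_mul, unop_mul, unop_op,
        show (K.subtype s : G) = (s : G) from rfl]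
      exact T0_mul_right ψ m s r _)

/-- The inverse of the heart equivalence. -/
noncomputable def PhiFun (ψ : ∀ q : DoubleCoset.Quotient (H : Set G) (K : Set G),
      (restrictScalars (cq H K R q)).obj M ⟶ (restrictScalars (iq H K R q)).obj X) :
    M ⟶ (restrictScalars (fH H R)).obj ((coextendScalars (fK K R)).obj X) :=
  ModuleCat.ofHom (X := ModuleCat.carrier M)
    (Y := ModuleCat.carrier ((restrictScalars (fH H R)).obj ((coextendScalars (fK K R)).obj X))) <|
  mkLinear (V := M)
    (W := ModuleCat.carrier ((restrictScalars (fH H R)).obj ((coextendScalars (fK K R)).obj X)))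
    (AddMonoidHom.mk' (fun m => Tlin H K R M X ψ m)
      (fun m m' => by
        apply LinearMap.ext; intro b
        exact T0_add ψ m m' _))
    (by
      intro s r m
      apply LinearMap.ext; intro b
      show T0 ψ (gs R s r • m) (unop (b : (MonoidAlgebra R G)ᵐᵒᵖ))
        = T0 ψ m ((MonoidAlgebra.mapDomainRingHom R H.subtype) (single s r)
            * unop (b : (MonoidAlgebra R G)ᵐᵒᵖ))
      rw [T0_smul_left, show (MonoidAlgebra.mapDomainRingHom R H.subtype) (single s r)
        = single ((s : ↥H) : G) r from by
          simp [MonoidAlgebra.mapDomainRingHom, Finsupp.mapDomain_single]])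

/-- The forward map of the heart equivalence. -/
noncomputable def toPiece
    (φ : M ⟶ (restrictScalars (fH H R)).obj ((coextendScalars (fK K R)).obj X))
    (q : DoubleCoset.Quotient (H : Set G) (K : Set G)) :
    (restrictScalars (cq H K R q)).obj M ⟶ (restrictScalars (iq H K R q)).obj X :=
  ModuleCat.ofHom (X := ModuleCat.carrier ((restrictScalars (cq H K R q)).obj M))
    (Y := ModuleCat.carrier ((restrictScalars (iq H K R q)).obj X)) <|
  mkLinear (V := ModuleCat.carrier ((restrictScalars (cq H K R q)).obj M))
    (W := ModuleCat.carrier ((restrictScalars (iq H K R q)).obj X))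
    (AddMonoidHom.mk'
      (fun m' => xToRes H K R X q
        (evalB K R X (φ (resToM H K R M q m')) (gs R (Quotient.out q) 1)))
      (fun m' m'' => by
        show xToRes H K R X q
            (evalB K R X (φ (resToM H K R M q (m' + m''))) (gs R (Quotient.out q) 1))
          = xToRes H K R X q
              (evalB K R X (φ (resToM H K R M q m')) (gs R (Quotient.out q) 1))
            + xToRes H K R X q
              (evalB K R X (φ (resToM H K R M q m'')) (gs R (Quotient.out q) 1))
        rw [show resToM H K R M q (m' + m'') = resToM H K R M q m' + resToM H K R M q m''
          from rfl, φ.hom.map_add]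
        rfl))
    (by
      intro x r m'
      show xToRes H K R X q
          (evalB K R X (φ (resToM H K R M q (gs R x r • m'))) (gs R (Quotient.out q) 1))
        = gs R x r • xToRes H K R X q
          (evalB K R X (φ (resToM H K R M q m')) (gs R (Quotient.out q) 1))
      rw [resToM_smul, xToRes_smul]
      congr 1
      rw [φ.hom.map_smul]
      show evalB K R X (φ (resToM H K R M q m'))
          ((gs R (Quotient.out q) 1) * (fH H R) (gs R (mackeyConj H K (Quotient.out q) x) r))
        = _
      rw [map_gs,
        show (H.subtype (mackeyConj H K (Quotient.out q) x) : G)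
          = Quotient.out q * (x : G) * (Quotient.out q)⁻¹ from rfl,
        gs_mul]
      have : (Quotient.out q * (x : G) * (Quotient.out q)⁻¹) * Quotient.out q
          = Quotient.out q * (x : G) := by group
      rw [this, mul_one]
      rw [show gs R (Subgroup.inclusion
            (inf_le_left : mackeyInter H K (Quotient.out q) ≤ K) x) r
            • evalB K R X (φ (resToM H K R M q m')) (gs R (Quotient.out q) 1)
          = evalB K R X (φ (resToM H K R M q m'))
            ((fK K R) (gs R (Subgroup.inclusion
              (inf_le_left : mackeyInter H K (Quotient.out q) ≤ K) x) r)
              * gs R (Quotient.out q) 1)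
        from (evalB_smulK _ _ _ _).symm]
      rw [map_gs, gs_mul, one_mul]
      rfl)

/-- The heart of Mackey's formula. -/
noncomputable def heartEquiv :
    (M ⟶ (restrictScalars (fH H R)).obj ((coextendScalars (fK K R)).obj X)) ≃
    (∀ q : DoubleCoset.Quotient (H : Set G) (K : Set G),
      (restrictScalars (cq H K R q)).obj M ⟶ (restrictScalars (iq H K R q)).obj X) where
  toFun φ := fun q => toPiece H K R M X φ q
  invFun ψ := PhiFun H K R M X ψ
  left_inv φ := by
    apply ModuleCat.hom_ext; apply LinearMap.ext; intro m
    apply LinearMap.ext; intro b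
    show T0 (fun q => toPiece H K R M X φ q) m (unop (b : (MonoidAlgebra R G)ᵐᵒᵖ))
      = evalB K R X (φ m) b
    obtain ⟨z, rfl⟩ : ∃ z : MonoidAlgebra R G, (op z : (MonoidAlgebra R G)ᵐᵒᵖ) = b :=
      ⟨unop (b : (MonoidAlgebra R G)ᵐᵒᵖ), rfl⟩
    rw [unop_op]
    induction z using MonoidAlgebra.induction_linear with
    | zero =>
      rw [map_zero, show (op (0 : MonoidAlgebra R G)) = (0 : (MonoidAlgebra R G)ᵐᵒᵖ) from rfl]
      exact (evalB_zero K R X _).symm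
    | add f g hf hg =>
      rw [map_add, show (op (f + g : MonoidAlgebra R G)) = op f + op g from rfl,
        hf, hg]
      exact (evalB_add K R X _ _ _).symm
    | single g r =>
      rw [T0_single]
      have d := dec_spec H K g
      have hsplit : (op (single g r) : (MonoidAlgebra R G)ᵐᵒᵖ)
          = (fK K R) (gs R (ksel H K g) r)
            * (gs R (Quotient.out (DoubleCoset.mk H K g)) 1 * (fH H R) (gs R (hsel H K g) 1)) := by
        rw [map_gs, map_gs, gs_mul, gs_mul, one_mul, one_mul,
          show (H.subtype (hsel H K g) : G) = (hsel H K g : G) from rfl,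
          show (K.subtype (ksel H K g) : G) = (ksel H K g : G) from rfl, ← d]
      rw [hsplit]
      refine Eq.trans ?_ ((evalB_smulK _ _ _ _).trans
        (congrArg (gs R (ksel H K g) r • ·) (evalB_smulH φ m _ _ _))).symm
      simp only [theta]
      rw [smul_smul, gs_mul, one_mul, mul_one]
      rfl
  right_inv ψ := by
    funext q
    apply ModuleCat.hom_ext; apply LinearMap.ext; intro m'
    show xToRes H K R X q
        (T0 ψ (resToM H K R M q m') (unop (gs R (Quotient.out q) 1))) = ψ q m'
    rw [unop_op, T0_single,
      show gs R (1 : ↥K) (1 : R) = 1 from gs_one, one_smul]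
    simp only [theta]
    rw [DoubleCoset.out_eq' H K q]
    have d := dec_spec H K (Quotient.out q)
    rw [DoubleCoset.out_eq' H K q] at d
    have e : (↑(hsel H K (Quotient.out q)) : G) * Quotient.out q * ↑(ksel H K (Quotient.out q))
        = (↑(1 : ↥H) : G) * Quotient.out q * (↑(1 : ↥K) : G) := by
      rw [← d, OneMemClass.coe_one, OneMemClass.coe_one, one_mul, mul_one]
    rw [wd ψ q (hsel H K (Quotient.out q)) 1 (ksel H K (Quotient.out q)) 1 e 1 1
        (resToM H K R M q m'),
      show gs R (1 : ↥K) (1 : R) = 1 from gs_one, one_smul,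
      show gs R (1 : ↥H) (1 : R) = 1 from gs_one, one_smul]
    rfl


variable {H K R M X}

lemma heart_natural {X' : ModuleCat (MonoidAlgebra R ↥K)ᵐᵒᵖ}
    (φ : M ⟶ (restrictScalars (fH H R)).obj ((coextendScalars (fK K R)).obj X))
    (u : X ⟶ X') (q : DoubleCoset.Quotient (H : Set G) (K : Set G)) :
    heartEquiv H K R M X'
        (φ ≫ (restrictScalars (fH H R)).map ((coextendScalars (fK K R)).map u)) q
      = heartEquiv H K R M X φ q ≫ (restrictScalars (iq H K R q)).map u := by
  apply ModuleCat.hom_ext; apply LinearMap.ext; intro m'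
  rfl

/-- Mapping out of a coproduct. -/
noncomputable def coprodEquiv {C : Type} [Ring C] {J : Type} (S : J → ModuleCat C)
    (T : ModuleCat C) :
    (∀ j, S j ⟶ T) ≃ ((∐ S) ⟶ T) where
  toFun t := Limits.Sigma.desc t
  invFun u j := Limits.Sigma.ι S j ≫ u
  left_inv t := funext fun j => Limits.Sigma.ι_desc _ _
  right_inv u := by
    apply Limits.Sigma.hom_ext
    intro j
    rw [Limits.Sigma.ι_desc]

lemma coprodEquiv_natural {C : Type} [Ring C] {J : Type} (S : J → ModuleCat C)
    {T T' : ModuleCat C} (u : T ⟶ T') (t : ∀ j, S j ⟶ T) :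
    coprodEquiv S T' (fun j => t j ≫ u) = coprodEquiv S T t ≫ u := by
  apply Limits.Sigma.hom_ext
  intro j
  simp [coprodEquiv]

section Assemble

variable (H K R M)
variable (IndG : ModuleCat (MonoidAlgebra R ↥H)ᵐᵒᵖ ⥤ ModuleCat (MonoidAlgebra R G)ᵐᵒᵖ)
    (adjG : IndG ⊣ ModuleCat.restrictScalars
      (RingHom.op (MonoidAlgebra.mapDomainRingHom R H.subtype)))
    (IndK : ∀ q : DoubleCoset.Quotient (H : Set G) (K : Set G),
      ModuleCat (MonoidAlgebra R ↥(mackeyInter H K (Quotient.out q)))ᵐᵒᵖ ⥤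
        ModuleCat (MonoidAlgebra R ↥K)ᵐᵒᵖ)
    (adjK : ∀ q : DoubleCoset.Quotient (H : Set G) (K : Set G),
      IndK q ⊣ ModuleCat.restrictScalars
        (RingHom.op (MonoidAlgebra.mapDomainRingHom R
          (Subgroup.inclusion (inf_le_left : mackeyInter H K (Quotient.out q) ≤ K)))))

/-- The chain of natural equivalences proving Mackey's formula. -/
noncomputable def Efun (X : ModuleCat (MonoidAlgebra R ↥K)ᵐᵒᵖ) :
    ((restrictScalars (fK K R)).obj (IndG.obj M) ⟶ X) ≃
    ((∐ fun q : DoubleCoset.Quotient (H : Set G) (K : Set G) =>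
      (IndK q).obj ((restrictScalars (cq H K R q)).obj M)) ⟶ X) :=
  (((restrictCoextendScalarsAdj (fK K R)).homEquiv (IndG.obj M) X).trans
    ((adjG.homEquiv M ((coextendScalars (fK K R)).obj X)).trans
      ((heartEquiv H K R M X).trans
        ((Equiv.piCongrRight fun q =>
          ((adjK q).homEquiv ((restrictScalars (cq H K R q)).obj M) X).symm).trans
          (coprodEquiv _ X)))))

lemma Efun_natural {X X' : ModuleCat (MonoidAlgebra R ↥K)ᵐᵒᵖ} (u : X ⟶ X')
    (t : (restrictScalars (fK K R)).obj (IndG.obj M) ⟶ X) :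
    Efun H K R M IndG adjG IndK adjK X' (t ≫ u)
      = Efun H K R M IndG adjG IndK adjK X t ≫ u := by
  show coprodEquiv _ X' (fun q => ((adjK q).homEquiv _ X').symm
      (heartEquiv H K R M X' (adjG.homEquiv M _
        ((restrictCoextendScalarsAdj (fK K R)).homEquiv (IndG.obj M) X' (t ≫ u))) q))
    = coprodEquiv _ X (fun q => ((adjK q).homEquiv _ X).symm
      (heartEquiv H K R M X (adjG.homEquiv M _
        ((restrictCoextendScalarsAdj (fK K R)).homEquiv (IndG.obj M) X t)) q)) ≫ u
  rw [← coprodEquiv_natural]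
  congr 1
  funext q
  rw [Adjunction.homEquiv_naturality_right, Adjunction.homEquiv_naturality_right,
    heart_natural, Adjunction.homEquiv_naturality_right_symm]

end Assemble

end Main

end MackeyProof

open MackeyProof ModuleCat in
/-- Mackey's formula: let `R` be a ring, `H, K ≤ G` groups and `M` a right `R[H]`-module (encoded
as a left module over the opposite group ring). Then
`Res^G_K Ind^G_H M ≅ ⊕_{g ∈ H\G/K} Ind^K_{K ∩ g⁻¹Hg} Res^{g⁻¹Hg}_{K ∩ g⁻¹Hg} (gM)`
as `R[K]`-modules, the sum running over a set of `(H,K)`-double coset representatives `g`. Here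
the conjugated module `gM = M ⊗_{R[H]} R[Hg]` is (canonically isomorphic to) `M` with the right
`K ∩ g⁻¹Hg`-action obtained by restricting along conjugation `x ↦ g x g⁻¹ : K ∩ g⁻¹Hg → H`, and
the induction functors are (any choice of) left adjoints of the corresponding restriction
functors. -/
theorem mackey_formula
    (H K : Subgroup G) (R : Type) [Ring R]
    (M : ModuleCat (MonoidAlgebra R ↥H)ᵐᵒᵖ)
    (IndG : ModuleCat (MonoidAlgebra R ↥H)ᵐᵒᵖ ⥤ ModuleCat (MonoidAlgebra R G)ᵐᵒᵖ)
    (adjG : IndG ⊣ ModuleCat.restrictScalars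
      (RingHom.op (MonoidAlgebra.mapDomainRingHom R H.subtype)))
    (IndK : ∀ q : DoubleCoset.Quotient (H : Set G) (K : Set G),
      ModuleCat (MonoidAlgebra R ↥(mackeyInter H K (Quotient.out q)))ᵐᵒᵖ ⥤
        ModuleCat (MonoidAlgebra R ↥K)ᵐᵒᵖ)
    (adjK : ∀ q : DoubleCoset.Quotient (H : Set G) (K : Set G),
      IndK q ⊣ ModuleCat.restrictScalars
        (RingHom.op (MonoidAlgebra.mapDomainRingHom R
          (Subgroup.inclusion (inf_le_left : mackeyInter H K (Quotient.out q) ≤ K))))) :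
    Nonempty
      ((ModuleCat.restrictScalars
          (RingHom.op (MonoidAlgebra.mapDomainRingHom R K.subtype))).obj (IndG.obj M) ≅
        ∐ fun q : DoubleCoset.Quotient (H : Set G) (K : Set G) =>
          (IndK q).obj ((ModuleCat.restrictScalars
            (RingHom.op (MonoidAlgebra.mapDomainRingHom R
              (mackeyConj H K (Quotient.out q))))).obj M)) := by
  refine ⟨?_⟩
  refine
    { hom := (Efun H K R M IndG adjG IndK adjK
        (∐ fun q : DoubleCoset.Quotient (H : Set G) (K : Set G) =>
          (IndK q).obj ((restrictScalars (cq H K R q)).obj M))).symm (𝟙 _)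
      inv := Efun H K R M IndG adjG IndK adjK
        ((restrictScalars (fK K R)).obj (IndG.obj M)) (𝟙 _)
      hom_inv_id := ?_
      inv_hom_id := ?_ }
  · apply (Efun H K R M IndG adjG IndK adjK _).injective
    rw [Efun_natural, Equiv.apply_symm_apply, Category.id_comp]
  · have h := Efun_natural H K R M IndG adjG IndK adjK
      ((Efun H K R M IndG adjG IndK adjK
        (∐ fun q : DoubleCoset.Quotient (H : Set G) (K : Set G) =>
          (IndK q).obj ((restrictScalars (cq H K R q)).obj M))).symm (𝟙 _))
      (𝟙 ((restrictScalars (fK K R)).obj (IndG.obj M)))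
    rw [Category.id_comp, Equiv.apply_symm_apply] at h
    exact h.symm
end

section
/- Let R be a ring, H, K ≤ G groups, and g ∈ G. Then there is an isomorphism of (R[H], R[K])-bimodules R[Hg] ⊗_{R[K ∩ g⁻¹Hg]} R[K] ≅ R[HgK], given by hg ⊗ k ↦ hgk, where R[X] for a subset X ⊆ G denotes the free R-submodule of R[G] spanned by X. -/
open MonoidAlgebra
open scoped Pointwise

set_option linter.unusedSectionVars false
set_option maxHeartbeats 1000000

namespace SpanDosetAux

/-- The span of the `single x 1` for `x ∈ S`. -/
noncomputable def SP (R : Type) [Ring R] {G : Type} [Group G] (S : Set G) :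
    Submodule R (MonoidAlgebra R G) :=
  Submodule.span R ((fun x : G => single x (1 : R)) '' S)

theorem SP_eq_supported (R : Type) [Ring R] {G : Type} [Group G] (S : Set G) :
    SP R S = MonoidAlgebra.supported R R S :=
  (MonoidAlgebra.supported_eq_span_single R S).symm

/-- The set `Hg`. -/
def sA {G : Type} [Group G] (H : Subgroup G) (g : G) : Set G := (H : Set G) * {g}

/-- The set `HgK`. -/
def sC {G : Type} [Group G] (H K : Subgroup G) (g : G) : Set G :=
  DoubleCoset.doubleCoset g (H : Set G) (K : Set G)

variable {G : Type} [Group G] {R : Type} [Ring R]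

lemma mem_SP {f : MonoidAlgebra R G} {S : Set G} : f ∈ SP R S ↔ ↑f.coeff.support ⊆ S := by
  rw [SP_eq_supported, MonoidAlgebra.mem_supported]

lemma single_mem_SP {a : G} {S : Set G} (h : a ∈ S) (r : R) : single a r ∈ SP R S := by
  rw [mem_SP]
  exact fun x hx => by
    rcases Finset.mem_singleton.1 (Finsupp.support_single_subset hx) with rfl; exact h

lemma mul_mem_SP {f h : MonoidAlgebra R G} {S T U : Set G}
    (hf : f ∈ SP R S) (hh : h ∈ SP R T) (hST : S * T ⊆ U) : f * h ∈ SP R U := by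
  classical
  rw [mem_SP] at hf hh ⊢
  refine (Finset.coe_subset.2 (MonoidAlgebra.support_coeff_mul_subset f h)).trans ?_
  rw [Finset.coe_mul]
  exact (Set.mul_subset_mul hf hh).trans hST

lemma support_step {S : Set G} {a : G} {b : R} {f : MonoidAlgebra R G}
    (haf : a ∉ f.coeff.support) (hb : b ≠ 0) (hf : single a b + f ∈ SP R S) :
    a ∈ S ∧ f ∈ SP R S := by
  classical
  have h1 : ↑(single a b + f).coeff.support ⊆ S := mem_SP.1 hf
  have hd : Disjoint (single a b).coeff.support f.coeff.support := by
    rw [MonoidAlgebra.coeff_single, Finsupp.support_single_ne_zero _ hb]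
    exact Finset.disjoint_singleton_left.2 haf
  have hsupp : (single a b + f).coeff.support = (single a b).coeff.support ∪ f.coeff.support :=
    Finsupp.support_add_eq hd
  constructor
  · refine h1 ?_
    rw [Finset.mem_coe, hsupp, MonoidAlgebra.coeff_single, Finsupp.support_single_ne_zero _ hb]
    exact Finset.mem_union_left _ (Finset.mem_singleton_self a)
  · refine mem_SP.2 fun x hx => h1 ?_
    rw [Finset.mem_coe] at hx ⊢
    rw [hsupp]
    exact Finset.mem_union_right _ hx

section Sets

variable (H K : Subgroup G) (g : G)

lemma setAB : sA H g * (K : Set G) ⊆ sC H K g := by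
  rw [sA, sC, DoubleCoset.doubleCoset]

lemma memsA {a : G} : a ∈ sA H g ↔ ∃ h' ∈ H, h' * g = a := by
  rw [sA, Set.mul_singleton]
  constructor
  · rintro ⟨h', hh', rfl⟩; exact ⟨h', hh', rfl⟩
  · rintro ⟨h', hh', rfl⟩; exact ⟨h', hh', rfl⟩

lemma memsC {a : G} : a ∈ sC H K g ↔ ∃ x ∈ H, ∃ y ∈ K, a = x * g * y := by
  rw [sC, DoubleCoset.mem_doubleCoset]; rfl

lemma setAL {l : G} (hl : l ∈ K ⊓ Subgroup.map (MulAut.conj g⁻¹).toMonoidHom H) :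
    sA H g * {l} ⊆ sA H g := by
  obtain ⟨-, h'', hh'', hconj⟩ := hl
  have hc : (g : G)⁻¹ * h'' * g = l := by
    rw [← hconj]; show _ = (MulAut.conj g⁻¹) h''; rw [MulAut.conj_apply]; group
  rw [Set.mul_singleton]
  rintro _ ⟨a, ha, rfl⟩
  rw [memsA] at ha ⊢
  obtain ⟨h', hh', rfl⟩ := ha
  exact ⟨h' * h'', H.mul_mem hh' hh'', by rw [← hc]; group⟩

lemma setLB {l : G} (hl : l ∈ K) : ({l} : Set G) * (K : Set G) ⊆ (K : Set G) := by
  rw [Set.singleton_mul]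
  rintro _ ⟨a, ha, rfl⟩
  exact K.mul_mem hl ha

lemma setHA {h : G} (hh : h ∈ H) : ({h} : Set G) * sA H g ⊆ sA H g := by
  rw [Set.singleton_mul]
  rintro _ ⟨a, ha, rfl⟩
  rw [memsA] at ha ⊢
  obtain ⟨h', hh', rfl⟩ := ha
  exact ⟨h * h', H.mul_mem hh hh', by group⟩

lemma setHC {h : G} (hh : h ∈ H) : ({h} : Set G) * sC H K g ⊆ sC H K g := by
  rw [Set.singleton_mul]
  rintro _ ⟨a, ha, rfl⟩
  rw [memsC] at ha ⊢
  obtain ⟨h', hh', k', hk', rfl⟩ := ha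
  exact ⟨h * h', H.mul_mem hh hh', k', hk', by group⟩

lemma setBK {k : G} (hk : k ∈ K) : (K : Set G) * ({k} : Set G) ⊆ (K : Set G) := by
  rw [Set.mul_singleton]
  rintro _ ⟨a, ha, rfl⟩
  exact K.mul_mem ha hk

lemma setCK {k : G} (hk : k ∈ K) : sC H K g * ({k} : Set G) ⊆ sC H K g := by
  rw [Set.mul_singleton]
  rintro _ ⟨a, ha, rfl⟩
  rw [memsC] at ha ⊢
  obtain ⟨h', hh', k', hk', rfl⟩ := ha
  exact ⟨h', hh', k' * k, K.mul_mem hk' hk, by group⟩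

end Sets

section Univ

variable (H K : Subgroup G) (g : G) {T : Type} [AddCommGroup T]

lemma memA (h' : G) (hh : h' ∈ H) (r : R) : single (h' * g) r ∈ SP R (sA H g) :=
  single_mem_SP ((memsA H g).2 ⟨h', hh, rfl⟩) r

lemma memB (k' : G) (hk : k' ∈ K) (r : R) : single k' r ∈ SP R (K : Set G) :=
  single_mem_SP hk r

lemma bcong {X Y : Type} {p : X → Prop} {q : Y → Prop} (β : Subtype p → Subtype q → T)
    {x x' : Subtype p} {y y' : Subtype q} (hx : x.1 = x'.1) (hy : y.1 = y'.1) :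
    β x y = β x' y' := by
  rw [Subtype.ext hx, Subtype.ext hy]

variable (β : SP R (sA H g) → SP R (K : Set G) → T)

lemma beta_zero_left (hadd1 : ∀ x₁ x₂ y, β (x₁ + x₂) y = β x₁ y + β x₂ y) (y) : β 0 y = 0 := by
  have h := hadd1 0 0 y
  rw [add_zero] at h
  exact left_eq_add.mp h

lemma beta_zero_right (hadd2 : ∀ x y₁ y₂, β x (y₁ + y₂) = β x y₁ + β x y₂) (x) : β x 0 = 0 := by
  have h := hadd2 x 0 0
  rw [add_zero] at h
  exact left_eq_add.mp h

lemma vlem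
    (hbalR : ∀ (r : R) (x : SP R (sA H g)) (y : SP R (K : Set G))
      (hx : r • (x : MonoidAlgebra R G) ∈ SP R (sA H g))
      (hy : r • (y : MonoidAlgebra R G) ∈ SP R (K : Set G)), β ⟨_, hx⟩ y = β x ⟨_, hy⟩)
    (h' k' : G) (hh : h' ∈ H) (hk : k' ∈ K) (r s : R) :
    β ⟨single (h' * g) r, memA H g h' hh r⟩ ⟨single k' s, memB K k' hk s⟩ =
      β ⟨single (h' * g) 1, memA H g h' hh 1⟩ ⟨single k' (r * s), memB K k' hk (r * s)⟩ := by
  have e1 : r • (single (h' * g) (1 : R) : MonoidAlgebra R G) = single (h' * g) r := by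
    rw [MonoidAlgebra.smul_single, smul_eq_mul, mul_one]
  have e2 : r • (single k' s : MonoidAlgebra R G) = single k' (r * s) := by
    rw [MonoidAlgebra.smul_single, smul_eq_mul]
  calc β ⟨single (h' * g) r, memA H g h' hh r⟩ ⟨single k' s, memB K k' hk s⟩
      = β ⟨r • (single (h' * g) 1 : MonoidAlgebra R G),
            (SP R (sA H g)).smul_mem r (memA H g h' hh 1)⟩
          ⟨single k' s, memB K k' hk s⟩ := bcong β e1.symm rfl
    _ = β ⟨single (h' * g) 1, memA H g h' hh 1⟩
          ⟨r • (single k' s : MonoidAlgebra R G),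
            (SP R (K : Set G)).smul_mem r (memB K k' hk s)⟩ :=
        hbalR r ⟨single (h' * g) 1, memA H g h' hh 1⟩ ⟨single k' s, memB K k' hk s⟩ _ _
    _ = _ := bcong β rfl e2

lemma wd
    (hbalL : ∀ (x : SP R (sA H g)) (y : SP R (K : Set G))
      (l : ↥(K ⊓ Subgroup.map (MulAut.conj g⁻¹).toMonoidHom H))
      (hx : (x : MonoidAlgebra R G) * single (l : G) (1 : R) ∈ SP R (sA H g))
      (hy : single (l : G) (1 : R) * (y : MonoidAlgebra R G) ∈ SP R (K : Set G)),
      β ⟨_, hx⟩ y = β x ⟨_, hy⟩)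
    (h1' k1 h2' k2 : G) (hh1 : h1' ∈ H) (hk1 : k1 ∈ K) (hh2 : h2' ∈ H) (hk2 : k2 ∈ K)
    (heq : h1' * g * k1 = h2' * g * k2) (c : R) :
    β ⟨single (h1' * g) 1, memA H g h1' hh1 1⟩ ⟨single k1 c, memB K k1 hk1 c⟩ =
      β ⟨single (h2' * g) 1, memA H g h2' hh2 1⟩ ⟨single k2 c, memB K k2 hk2 c⟩ := by
  have e0 : g⁻¹ * (h2'⁻¹ * h1') * g * k1 = k2 := by
    calc g⁻¹ * (h2'⁻¹ * h1') * g * k1 = g⁻¹ * h2'⁻¹ * (h1' * g * k1) := by group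
      _ = g⁻¹ * h2'⁻¹ * (h2' * g * k2) := by rw [heq]
      _ = k2 := by group
  have hlK : g⁻¹ * (h2'⁻¹ * h1') * g ∈ K := by
    have e : g⁻¹ * (h2'⁻¹ * h1') * g = k2 * k1⁻¹ := by rw [← e0]; group
    rw [e]; exact K.mul_mem hk2 (K.inv_mem hk1)
  have hlH : g⁻¹ * (h2'⁻¹ * h1') * g ∈ Subgroup.map (MulAut.conj g⁻¹).toMonoidHom H := by
    refine ⟨h2'⁻¹ * h1', H.mul_mem (H.inv_mem hh2) hh1, ?_⟩
    show (MulAut.conj g⁻¹) (h2'⁻¹ * h1') = _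
    rw [MulAut.conj_apply]; group
  have e1 : (single (h2' * g) (1 : R) : MonoidAlgebra R G) *
      single (g⁻¹ * (h2'⁻¹ * h1') * g) 1 = single (h1' * g) 1 := by
    rw [MonoidAlgebra.single_mul_single, mul_one]
    congr 1
    group
  have e2 : (single (g⁻¹ * (h2'⁻¹ * h1') * g) (1 : R) : MonoidAlgebra R G) * single k1 c =
      single k2 c := by
    rw [MonoidAlgebra.single_mul_single, one_mul, e0]
  have hx : (single (h2' * g) (1 : R) : MonoidAlgebra R G) *
      single (g⁻¹ * (h2'⁻¹ * h1') * g) 1 ∈ SP R (sA H g) := by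
    rw [e1]; exact memA H g h1' hh1 1
  have hy : (single (g⁻¹ * (h2'⁻¹ * h1') * g) (1 : R) : MonoidAlgebra R G) * single k1 c ∈
      SP R (K : Set G) := by
    rw [e2]; exact memB K k2 hk2 c
  calc β ⟨single (h1' * g) 1, memA H g h1' hh1 1⟩ ⟨single k1 c, memB K k1 hk1 c⟩
      = β ⟨_, hx⟩ ⟨single k1 c, memB K k1 hk1 c⟩ := bcong β e1.symm rfl
    _ = β ⟨single (h2' * g) 1, memA H g h2' hh2 1⟩ ⟨_, hy⟩ :=
        hbalL ⟨single (h2' * g) 1, memA H g h2' hh2 1⟩ ⟨single k1 c, memB K k1 hk1 c⟩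
          ⟨g⁻¹ * (h2'⁻¹ * h1') * g, Subgroup.mem_inf.2 ⟨hlK, hlH⟩⟩ hx hy
    _ = _ := bcong β rfl e2

/-- First component of a chosen decomposition of `d ∈ HgK` as `h * g * k`. -/
noncomputable def dec1 (d : G) (hd : d ∈ sC H K g) : G :=
  ((memsC H K g).1 hd).choose

/-- Second component of a chosen decomposition of `d ∈ HgK` as `h * g * k`. -/
noncomputable def dec2 (d : G) (hd : d ∈ sC H K g) : G :=
  ((memsC H K g).1 hd).choose_spec.2.choose

lemma dec_spec (d : G) (hd : d ∈ sC H K g) :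
    dec1 H K g d hd ∈ H ∧ dec2 H K g d hd ∈ K ∧
      d = dec1 H K g d hd * g * dec2 H K g d hd :=
  ⟨((memsC H K g).1 hd).choose_spec.1, ((memsC H K g).1 hd).choose_spec.2.choose_spec.1,
    ((memsC H K g).1 hd).choose_spec.2.choose_spec.2⟩

/-- The value of the lift on a basis vector `single d r`, `d ∈ HgK`. -/
noncomputable def phi (hadd1 : ∀ x₁ x₂ y, β (x₁ + x₂) y = β x₁ y + β x₂ y) (d : G) :
    R →+ T :=
  letI := Classical.dec (d ∈ sC H K g)
  if hd : d ∈ sC H K g then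
    AddMonoidHom.mk'
      (fun r => β ⟨single (dec1 H K g d hd * g) r, memA H g _ (dec_spec H K g d hd).1 r⟩
        ⟨single (dec2 H K g d hd) 1, memB K _ (dec_spec H K g d hd).2.1 1⟩)
      (fun r s => by
        rw [show (⟨single (dec1 H K g d hd * g) (r + s),
              memA H g _ (dec_spec H K g d hd).1 (r + s)⟩ : SP R (sA H g)) =
            ⟨single (dec1 H K g d hd * g) r, memA H g _ (dec_spec H K g d hd).1 r⟩ +
            ⟨single (dec1 H K g d hd * g) s, memA H g _ (dec_spec H K g d hd).1 s⟩ from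
          Subtype.ext (MonoidAlgebra.single_add _ r s), hadd1])
  else 0

lemma phi_apply (hadd1 : ∀ x₁ x₂ y, β (x₁ + x₂) y = β x₁ y + β x₂ y) (d : G)
    (hd : d ∈ sC H K g) (r : R) :
    phi H K g β hadd1 d r =
      β ⟨single (dec1 H K g d hd * g) r, memA H g _ (dec_spec H K g d hd).1 r⟩
        ⟨single (dec2 H K g d hd) 1, memB K _ (dec_spec H K g d hd).2.1 1⟩ := by
  simp only [phi]
  rw [dif_pos hd]
  rfl

/-- The lift `R[HgK] →+ T` of a balanced biadditive map. -/
noncomputable def gam (hadd1 : ∀ x₁ x₂ y, β (x₁ + x₂) y = β x₁ y + β x₂ y) :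
    SP R (sC H K g) →+ T :=
  (Finsupp.liftAddHom (phi H K g β hadd1)).comp
    (MonoidAlgebra.coeffAddEquiv.toAddMonoidHom.comp (SP R (sC H K g)).subtype.toAddMonoidHom)

lemma gam_single (hadd1 : ∀ x₁ x₂ y, β (x₁ + x₂) y = β x₁ y + β x₂ y) (d : G) (r : R)
    (hm : single d r ∈ SP R (sC H K g)) :
    gam H K g β hadd1 ⟨single d r, hm⟩ = phi H K g β hadd1 d r := by
  show Finsupp.liftAddHom (phi H K g β hadd1) (single d r).coeff = _
  exact Finsupp.liftAddHom_apply_single _ d r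

lemma gam_single_single
    (hadd1 : ∀ x₁ x₂ y, β (x₁ + x₂) y = β x₁ y + β x₂ y)
    (hbalR : ∀ (r : R) (x : SP R (sA H g)) (y : SP R (K : Set G))
      (hx : r • (x : MonoidAlgebra R G) ∈ SP R (sA H g))
      (hy : r • (y : MonoidAlgebra R G) ∈ SP R (K : Set G)), β ⟨_, hx⟩ y = β x ⟨_, hy⟩)
    (hbalL : ∀ (x : SP R (sA H g)) (y : SP R (K : Set G))
      (l : ↥(K ⊓ Subgroup.map (MulAut.conj g⁻¹).toMonoidHom H))
      (hx : (x : MonoidAlgebra R G) * single (l : G) (1 : R) ∈ SP R (sA H g))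
      (hy : single (l : G) (1 : R) * (y : MonoidAlgebra R G) ∈ SP R (K : Set G)),
      β ⟨_, hx⟩ y = β x ⟨_, hy⟩)
    (a c : G) (ha : a ∈ sA H g) (hc : c ∈ K) (r s : R)
    (hm : (single a r : MonoidAlgebra R G) * single c s ∈ SP R (sC H K g)) :
    gam H K g β hadd1 ⟨single a r * single c s, hm⟩ =
      β ⟨single a r, single_mem_SP ha r⟩ ⟨single c s, memB K c hc s⟩ := by
  obtain ⟨h', hh', rfl⟩ := (memsA H g).1 ha
  have e : (single (h' * g) r : MonoidAlgebra R G) * single c s =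
      single (h' * g * c) (r * s) := MonoidAlgebra.single_mul_single _ _ _ _
  have hd : h' * g * c ∈ sC H K g := (memsC H K g).2 ⟨h', hh', c, hc, rfl⟩
  have hm2 : single (h' * g * c) (r * s) ∈ SP R (sC H K g) := single_mem_SP hd (r * s)
  obtain ⟨hd1, hd2, hd3⟩ := dec_spec H K g (h' * g * c) hd
  rw [show (⟨single (h' * g) r * single c s, hm⟩ : SP R (sC H K g)) =
      ⟨single (h' * g * c) (r * s), hm2⟩ from Subtype.ext e]
  rw [gam_single, phi_apply H K g β hadd1 _ hd]
  rw [vlem H K g β hbalR _ _ hd1 hd2 (r * s) 1, mul_one ((r : R) * s)]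
  rw [vlem H K g β hbalR h' c hh' hc r s]
  exact wd H K g β hbalL _ _ h' c hd1 hd2 hh' hc hd3.symm (r * s)

lemma gam_single_mul
    (hadd1 : ∀ x₁ x₂ y, β (x₁ + x₂) y = β x₁ y + β x₂ y)
    (hadd2 : ∀ x y₁ y₂, β x (y₁ + y₂) = β x y₁ + β x y₂)
    (hbalR : ∀ (r : R) (x : SP R (sA H g)) (y : SP R (K : Set G))
      (hx : r • (x : MonoidAlgebra R G) ∈ SP R (sA H g))
      (hy : r • (y : MonoidAlgebra R G) ∈ SP R (K : Set G)), β ⟨_, hx⟩ y = β x ⟨_, hy⟩)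
    (hbalL : ∀ (x : SP R (sA H g)) (y : SP R (K : Set G))
      (l : ↥(K ⊓ Subgroup.map (MulAut.conj g⁻¹).toMonoidHom H))
      (hx : (x : MonoidAlgebra R G) * single (l : G) (1 : R) ∈ SP R (sA H g))
      (hy : single (l : G) (1 : R) * (y : MonoidAlgebra R G) ∈ SP R (K : Set G)),
      β ⟨_, hx⟩ y = β x ⟨_, hy⟩)
    (a : G) (ha : a ∈ sA H g) (r : R) :
    ∀ (q : MonoidAlgebra R G) (hq : q ∈ SP R (K : Set G))
      (h : (single a r : MonoidAlgebra R G) * q ∈ SP R (sC H K g)),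
      gam H K g β hadd1 ⟨single a r * q, h⟩ =
        β ⟨single a r, single_mem_SP ha r⟩ ⟨q, hq⟩ := by
  intro q
  induction q using MonoidAlgebra.induction with
  | zero =>
    intro hq h
    rw [show (⟨single a r * 0, h⟩ : SP R (sC H K g)) = 0 from Subtype.ext (mul_zero _),
      map_zero]
    rw [show (⟨(0 : MonoidAlgebra R G), hq⟩ : SP R (K : Set G)) = 0 from Subtype.ext rfl]
    exact (beta_zero_right H K g β hadd2 _).symm
  | single_add c s q0 hcq0 hs ih =>
    intro hq h
    obtain ⟨q', rfl⟩ : ∃ z : MonoidAlgebra R G, z = q0 := ⟨q0, rfl⟩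
    obtain ⟨hcK, hq'B⟩ := support_step hcq0 hs hq
    have m1 : (single a r : MonoidAlgebra R G) * single c s ∈ SP R (sC H K g) :=
      mul_mem_SP (single_mem_SP ha r) (single_mem_SP hcK s) (setAB H K g)
    have m2 : (single a r : MonoidAlgebra R G) * (q' : MonoidAlgebra R G) ∈ SP R (sC H K g) :=
      mul_mem_SP (single_mem_SP ha r) hq'B (setAB H K g)
    rw [show (⟨single a r * (single c s + q'), h⟩ : SP R (sC H K g)) =
        ⟨(single a r : MonoidAlgebra R G) * single c s, m1⟩ +
          ⟨(single a r : MonoidAlgebra R G) * (q' : MonoidAlgebra R G), m2⟩ from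
      Subtype.ext (mul_add _ _ _), map_add]
    rw [show (⟨single c s + q', hq⟩ : SP R (K : Set G)) =
        ⟨(single c s : MonoidAlgebra R G), memB K c hcK s⟩ + ⟨(q' : MonoidAlgebra R G), hq'B⟩
      from Subtype.ext rfl, hadd2]
    rw [gam_single_single H K g β hadd1 hbalR hbalL a c ha hcK r s m1, ih hq'B m2]

lemma gam_mul
    (hadd1 : ∀ x₁ x₂ y, β (x₁ + x₂) y = β x₁ y + β x₂ y)
    (hadd2 : ∀ x y₁ y₂, β x (y₁ + y₂) = β x y₁ + β x y₂)
    (hbalR : ∀ (r : R) (x : SP R (sA H g)) (y : SP R (K : Set G))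
      (hx : r • (x : MonoidAlgebra R G) ∈ SP R (sA H g))
      (hy : r • (y : MonoidAlgebra R G) ∈ SP R (K : Set G)), β ⟨_, hx⟩ y = β x ⟨_, hy⟩)
    (hbalL : ∀ (x : SP R (sA H g)) (y : SP R (K : Set G))
      (l : ↥(K ⊓ Subgroup.map (MulAut.conj g⁻¹).toMonoidHom H))
      (hx : (x : MonoidAlgebra R G) * single (l : G) (1 : R) ∈ SP R (sA H g))
      (hy : single (l : G) (1 : R) * (y : MonoidAlgebra R G) ∈ SP R (K : Set G)),
      β ⟨_, hx⟩ y = β x ⟨_, hy⟩) :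
    ∀ (f : MonoidAlgebra R G) (hf : f ∈ SP R (sA H g)) (q : MonoidAlgebra R G)
      (hq : q ∈ SP R (K : Set G)) (h : f * q ∈ SP R (sC H K g)),
      gam H K g β hadd1 ⟨f * q, h⟩ = β ⟨f, hf⟩ ⟨q, hq⟩ := by
  intro f
  induction f using MonoidAlgebra.induction with
  | zero =>
    intro hf q hq h
    rw [show (⟨0 * q, h⟩ : SP R (sC H K g)) = 0 from Subtype.ext (zero_mul _), map_zero]
    rw [show (⟨(0 : MonoidAlgebra R G), hf⟩ : SP R (sA H g)) = 0 from Subtype.ext rfl]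
    exact (beta_zero_left H K g β hadd1 _).symm
  | single_add a b f0 haf hb ih =>
    intro hf q hq h
    obtain ⟨f', rfl⟩ : ∃ z : MonoidAlgebra R G, z = f0 := ⟨f0, rfl⟩
    obtain ⟨haA, hf'A⟩ := support_step haf hb hf
    have m1 : (single a b : MonoidAlgebra R G) * q ∈ SP R (sC H K g) :=
      mul_mem_SP (single_mem_SP haA b) hq (setAB H K g)
    have m2 : (f' : MonoidAlgebra R G) * q ∈ SP R (sC H K g) :=
      mul_mem_SP hf'A hq (setAB H K g)
    rw [show (⟨(single a b + f') * q, h⟩ : SP R (sC H K g)) =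
        ⟨(single a b : MonoidAlgebra R G) * q, m1⟩ +
          ⟨(f' : MonoidAlgebra R G) * q, m2⟩ from Subtype.ext (add_mul _ _ _), map_add]
    rw [show (⟨single a b + f', hf⟩ : SP R (sA H g)) =
        ⟨(single a b : MonoidAlgebra R G), single_mem_SP haA b⟩ +
          ⟨(f' : MonoidAlgebra R G), hf'A⟩ from Subtype.ext rfl, hadd1]
    rw [gam_single_mul H K g β hadd1 hadd2 hbalR hbalL a haA b q hq m1,
      ih hf'A q hq m2]

lemma gam_unique (γ₁ γ₂ : SP R (sC H K g) →+ T)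
    (p₁ : ∀ (x : SP R (sA H g)) (y : SP R (K : Set G))
      (h : (x : MonoidAlgebra R G) * y ∈ SP R (sC H K g)), γ₁ ⟨_, h⟩ = β x y)
    (p₂ : ∀ (x : SP R (sA H g)) (y : SP R (K : Set G))
      (h : (x : MonoidAlgebra R G) * y ∈ SP R (sC H K g)), γ₂ ⟨_, h⟩ = β x y) :
    γ₁ = γ₂ := by
  have hgen : ∀ (f : MonoidAlgebra R G) (hf : f ∈ SP R (sC H K g)),
      γ₁ ⟨f, hf⟩ = γ₂ ⟨f, hf⟩ := by
    intro f
    induction f using MonoidAlgebra.induction with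
    | zero =>
      intro hf
      rw [show (⟨(0 : MonoidAlgebra R G), hf⟩ : SP R (sC H K g)) = 0 from Subtype.ext rfl,
        map_zero, map_zero]
    | single_add d b f0 hdf hb ih =>
      intro hf
      obtain ⟨f', rfl⟩ : ∃ z : MonoidAlgebra R G, z = f0 := ⟨f0, rfl⟩
      obtain ⟨hdC, hf'C⟩ := support_step hdf hb hf
      have m1 : (single d b : MonoidAlgebra R G) ∈ SP R (sC H K g) := single_mem_SP hdC b
      rw [show (⟨single d b + f', hf⟩ : SP R (sC H K g)) =
          ⟨(single d b : MonoidAlgebra R G), m1⟩ + ⟨(f' : MonoidAlgebra R G), hf'C⟩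
        from Subtype.ext rfl, map_add, map_add, ih hf'C]
      obtain ⟨h', hh', k', hk', rfl⟩ := (memsC H K g).1 hdC
      have e : (single (h' * g) b : MonoidAlgebra R G) * single k' 1 =
          single (h' * g * k') b := by
        rw [MonoidAlgebra.single_mul_single, mul_one]
      have hxy : (single (h' * g) b : MonoidAlgebra R G) * single k' 1 ∈ SP R (sC H K g) :=
        mul_mem_SP (memA H g h' hh' b) (memB K k' hk' 1) (setAB H K g)
      have es : (⟨single (h' * g * k') b, m1⟩ : SP R (sC H K g)) =
          ⟨single (h' * g) b * single k' 1, hxy⟩ := Subtype.ext e.symm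
      rw [es, p₁ ⟨single (h' * g) b, memA H g h' hh' b⟩ ⟨single k' 1, memB K k' hk' 1⟩ hxy,
        p₂ ⟨single (h' * g) b, memA H g h' hh' b⟩ ⟨single k' 1, memB K k' hk' 1⟩ hxy]
  ext c
  exact hgen c.1 c.2

theorem univ
    (hadd1 : ∀ x₁ x₂ y, β (x₁ + x₂) y = β x₁ y + β x₂ y)
    (hadd2 : ∀ x y₁ y₂, β x (y₁ + y₂) = β x y₁ + β x y₂)
    (hbalR : ∀ (r : R) (x : SP R (sA H g)) (y : SP R (K : Set G))
      (hx : r • (x : MonoidAlgebra R G) ∈ SP R (sA H g))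
      (hy : r • (y : MonoidAlgebra R G) ∈ SP R (K : Set G)), β ⟨_, hx⟩ y = β x ⟨_, hy⟩)
    (hbalL : ∀ (x : SP R (sA H g)) (y : SP R (K : Set G))
      (l : ↥(K ⊓ Subgroup.map (MulAut.conj g⁻¹).toMonoidHom H))
      (hx : (x : MonoidAlgebra R G) * single (l : G) (1 : R) ∈ SP R (sA H g))
      (hy : single (l : G) (1 : R) * (y : MonoidAlgebra R G) ∈ SP R (K : Set G)),
      β ⟨_, hx⟩ y = β x ⟨_, hy⟩) :
    ∃! γ : SP R (sC H K g) →+ T,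
      ∀ (x : SP R (sA H g)) (y : SP R (K : Set G))
        (h : (x : MonoidAlgebra R G) * y ∈ SP R (sC H K g)), γ ⟨_, h⟩ = β x y := by
  have hex : ∀ (x : SP R (sA H g)) (y : SP R (K : Set G))
      (h : (x : MonoidAlgebra R G) * y ∈ SP R (sC H K g)),
      gam H K g β hadd1 ⟨_, h⟩ = β x y := fun x y h =>
    gam_mul H K g β hadd1 hadd2 hbalR hbalL x.1 x.2 y.1 y.2 h
  exact ⟨gam H K g β hadd1, hex, fun γ' hγ' => gam_unique H K g β γ' (gam H K g β hadd1) hγ' hex⟩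

end Univ

end SpanDosetAux

open SpanDosetAux in
/-- Let `R` be a ring, `H, K ≤ G` groups and `g ∈ G`. Then multiplication induces an isomorphism
of `(R[H], R[K])`-bimodules `R[Hg] ⊗_{R[K ∩ g⁻¹Hg]} R[K] ≅ R[HgK]`, `hg ⊗ k ↦ hgk`, where `R[X]`
for a subset `X ⊆ G` denotes the free `R`-submodule of `R[G]` spanned by `X`. This is expressed
by the universal property of the balanced tensor product: multiplication `R[Hg] × R[K] → R[HgK]`
is well defined, `R[K ∩ g⁻¹Hg]`-balanced, compatible with the left `R[H]`- and right
`R[K]`-actions, and `R[HgK]` together with this map is universal among balanced biadditive maps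
out of `R[Hg] × R[K]`. -/
theorem span_doset_is_balanced_tensor_product
    (G : Type) [Group G] (H K : Subgroup G) (R : Type) [Ring R] (g : G) :
    -- notation: A = R[Hg], B = R[K], C = R[HgK], L = K ∩ g⁻¹Hg
    letI A : Submodule R (MonoidAlgebra R G) :=
      Submodule.span R ((fun x : G => single x (1 : R)) '' ((H : Set G) * ({g} : Set G)))
    letI B : Submodule R (MonoidAlgebra R G) :=
      Submodule.span R ((fun x : G => single x (1 : R)) '' (K : Set G))
    letI C : Submodule R (MonoidAlgebra R G) :=
      Submodule.span R ((fun x : G => single x (1 : R)) ''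
        DoubleCoset.doubleCoset g (H : Set G) (K : Set G))
    letI L : Subgroup G := K ⊓ Subgroup.map (MulAut.conj g⁻¹).toMonoidHom H
    -- multiplication is well defined from A × B to C
    (∀ x ∈ A, ∀ y ∈ B, x * y ∈ C) ∧
    -- A is stable under the right R[L]-action and B under the left R[L]-action
    (∀ x ∈ A, ∀ l ∈ L, x * single l (1 : R) ∈ A) ∧
    (∀ y ∈ B, ∀ l ∈ L, single l (1 : R) * y ∈ B) ∧
    -- A and C are stable under left multiplication by H; B and C under right mult. by K
    (∀ h ∈ H, (∀ x ∈ A, single h (1 : R) * x ∈ A) ∧ (∀ c ∈ C, single h (1 : R) * c ∈ C)) ∧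
    (∀ k ∈ K, (∀ y ∈ B, y * single k (1 : R) ∈ B) ∧ (∀ c ∈ C, c * single k (1 : R) ∈ C)) ∧
    -- universal property: (C, multiplication) is the balanced tensor product of A and B over
    -- R[L]; together with the trivially verified bimodule equivariance of multiplication, this
    -- says that `hg ⊗ k ↦ hgk` is an isomorphism of (R[H], R[K])-bimodules
    -- `R[Hg] ⊗_{R[L]} R[K] ≅ R[HgK]`
    ∀ (T : Type) [AddCommGroup T] (β : A → B → T),
      (∀ x₁ x₂ y, β (x₁ + x₂) y = β x₁ y + β x₂ y) →
      (∀ x y₁ y₂, β x (y₁ + y₂) = β x y₁ + β x y₂) →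
      (∀ (r : R) (x : A) (y : B) (hx : r • (x : MonoidAlgebra R G) ∈ A)
          (hy : r • (y : MonoidAlgebra R G) ∈ B), β ⟨_, hx⟩ y = β x ⟨_, hy⟩) →
      (∀ (x : A) (y : B) (l : L)
          (hx : (x : MonoidAlgebra R G) * single (l : G) (1 : R) ∈ A)
          (hy : single (l : G) (1 : R) * (y : MonoidAlgebra R G) ∈ B),
          β ⟨_, hx⟩ y = β x ⟨_, hy⟩) →
      ∃! γ : C →+ T, ∀ (x : A) (y : B) (h : (x : MonoidAlgebra R G) * y ∈ C),
        γ ⟨_, h⟩ = β x y := by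

  refine ⟨fun x hx y hy => mul_mem_SP hx hy (setAB H K g),
    fun x hx l hl => mul_mem_SP hx (single_mem_SP (Set.mem_singleton l) 1) (setAL H K g hl),
    fun y hy l hl =>
      mul_mem_SP (single_mem_SP (Set.mem_singleton l) 1) hy
        (setLB K (Subgroup.mem_inf.1 hl).1),
    fun h hh =>
      ⟨fun x hx => mul_mem_SP (single_mem_SP (Set.mem_singleton h) 1) hx (setHA H g hh),
       fun c hc => mul_mem_SP (single_mem_SP (Set.mem_singleton h) 1) hc (setHC H K g hh)⟩,
    fun k hk =>
      ⟨fun y hy => mul_mem_SP hy (single_mem_SP (Set.mem_singleton k) 1) (setBK K hk),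
       fun c hc => mul_mem_SP hc (single_mem_SP (Set.mem_singleton k) 1) (setCK H K g hk)⟩,
    fun T _ β h1 h2 h3 h4 => univ H K g β h1 h2 h3 h4⟩
end
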